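/- arXiv:1007.1791 — 9 statements merged into one kernel-verified Lean document; each statement's English description precedes it below -/
import Mathlib

section
/- For all integers n ≥ 1, m ≥ 1 and every integer i, the number of tuples (λ_0, …, λ_{n−1}) of nonnegative integers with λ_0 + ⋯ + λ_{n−1} = m and Σ_{j=0}^{n−1} j·λ_j ≡ i (mod n) equals the number of tuples (μ_0, …, μ_{m−1}) of nonnegative integers with μ_0 + ⋯ + μ_{m−1} = n and Σ_{j=0}^{m−1} j·μ_j ≡ i (mod m) (Fredman's reciprocity). -/
open Finset

namespace Fredman

variable {N : ℕ}

def C (s : Finset (Fin N)) : ℤ := ∑ x ∈ s, (x.val : ℤ)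

def top (N : ℕ) [NeZero N] : Fin N := ⟨N - 1, by have := NeZero.ne N; omega⟩

lemma top_sub_val [NeZero N] (k : Fin N) : (top N - k).val = N - 1 - k.val := by
  have hk := k.isLt
  have hN : N ≠ 0 := NeZero.ne N
  rw [Fin.sub_def]
  show (N - k.val + (N - 1)) % N = N - 1 - k.val
  have h1 : N - k.val + (N - 1) = (N - 1 - k.val) + N := by omega
  rw [h1, Nat.add_mod_right, Nat.mod_eq_of_lt (by omega)]

def shift [NeZero N] (k : Fin N) (s : Finset (Fin N)) : Finset (Fin N) :=
  s.map (addRightEmbedding k)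

lemma card_shift [NeZero N] (k : Fin N) (s : Finset (Fin N)) : (shift k s).card = s.card :=
  Finset.card_map _

lemma mem_shift [NeZero N] {k : Fin N} {s : Finset (Fin N)} {x : Fin N} :
    x ∈ shift k s ↔ x - k ∈ s := by
  simp only [shift, Finset.mem_map, addRightEmbedding_apply]
  constructor
  · rintro ⟨y, hy, rfl⟩; simpa using hy
  · intro h; exact ⟨x - k, h, by simp⟩

lemma shift_shift [NeZero N] (k k' : Fin N) (s : Finset (Fin N)) :
    shift k' (shift k s) = shift (k + k') s := by
  ext x
  simp only [shift, Finset.mem_map, addRightEmbedding_apply]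
  constructor
  · rintro ⟨y, ⟨z, hz, rfl⟩, rfl⟩; exact ⟨z, hz, by rw [add_assoc]⟩
  · rintro ⟨z, hz, rfl⟩; exact ⟨z + k, ⟨z, hz, rfl⟩, by rw [add_assoc]⟩

lemma shift_neg_shift [NeZero N] (k : Fin N) (s : Finset (Fin N)) :
    shift (-k) (shift k s) = s := by
  rw [shift_shift, add_neg_cancel]
  ext x
  simp only [shift, Finset.mem_map, addRightEmbedding_apply, add_zero]
  exact ⟨fun ⟨y, hy, h⟩ => h ▸ hy, fun h => ⟨x, h, rfl⟩⟩

lemma gauss (k : ℕ) : 2 * (∑ j ∈ range k, (j : ℤ)) = k * k - k := by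
  induction k with
  | zero => simp
  | succ k ih => rw [Finset.sum_range_succ]; push_cast; push_cast at ih; ring_nf; ring_nf at ih; omega

lemma card_val_gt [NeZero N] (p : Fin N) :
    ((univ : Finset (Fin N)).filter fun x => p.val < x.val).card = N - 1 - p.val := by
  have hp := p.isLt
  rw [← Finset.card_range (N - 1 - p.val)]
  apply Finset.card_bij' (fun x _ => x.val - p.val - 1)
    (fun t ht => (⟨p.val + 1 + t, by rw [mem_range] at ht; omega⟩ : Fin N)) <;>
    (intro x hx; simp only [mem_filter, mem_univ, mem_range, true_and] at hx ⊢) <;>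
    first
      | (have := x.isLt; omega)
      | (apply Fin.ext; simp only [Fin.val_mk]; omega)
      | omega

lemma card_filter_count (s : Finset (Fin N)) (Q : ℕ → Prop) [DecidablePred Q] :
    (s.filter fun p => Q ((s.filter fun x => p.val < x.val).card)).card
      = ((range s.card).filter Q).card := by
  set o : Fin N → ℕ := fun p => (s.filter fun x => p.val < x.val).card with ho
  have hanti : ∀ p ∈ s, ∀ q ∈ s, p.val < q.val → o q < o p := by
    intro p hp q hq hpq
    apply Finset.card_lt_card
    constructor
    · intro x hx; rw [mem_filter] at hx ⊢; exact ⟨hx.1, lt_trans hpq hx.2⟩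
    · intro hsub
      have hq' : q ∈ s.filter fun x => p.val < x.val := by rw [mem_filter]; exact ⟨hq, hpq⟩
      have := hsub hq'
      rw [mem_filter] at this
      omega
  have hinj : Set.InjOn o s := by
    intro p hp q hq hpq
    by_contra hne
    rcases Nat.lt_trichotomy p.val q.val with h | h | h
    · have := hanti p hp q hq h; omega
    · exact hne (Fin.ext h)
    · have := hanti q hq p hp h; omega
  have hlt : ∀ p ∈ s, o p < s.card := by
    intro p hp
    have h1 : (s.filter fun x => p.val < x.val) ⊆ s.erase p := by
      intro x hx; rw [mem_filter] at hx; rw [mem_erase]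
      exact ⟨fun h => by rw [h] at hx; omega, hx.1⟩
    have h2 := Finset.card_le_card h1
    rw [Finset.card_erase_of_mem hp] at h2
    have : 0 < s.card := Finset.card_pos.mpr ⟨p, hp⟩
    simp only [ho]
    omega
  have himg : s.image o = range s.card := by
    apply Finset.eq_of_subset_of_card_le
    · intro t ht; rw [Finset.mem_image] at ht; obtain ⟨p, hp, rfl⟩ := ht
      rw [mem_range]; exact hlt p hp
    · rw [Finset.card_range, Finset.card_image_of_injOn hinj]
  calc (s.filter fun p => Q (o p)).card
      = ((s.filter fun p => Q (o p)).image o).card := by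
        rw [Finset.card_image_of_injOn (hinj.mono (by intro x hx; exact (mem_filter.mp hx).1))]
    _ = ((s.image o).filter Q).card := by rw [Finset.filter_image]
    _ = ((range s.card).filter Q).card := by rw [himg]

lemma C_shift [NeZero N] (k : Fin N) (s : Finset (Fin N)) :
    C (shift k s) = C s + s.card * k.val
      - N * ((s.filter fun x => N ≤ x.val + k.val).card) := by
  have hsum : C (shift k s) = ∑ x ∈ s, (((x + k).val : ℕ) : ℤ) := by
    rw [C, shift, Finset.sum_map]
    simp [addRightEmbedding_apply]
  rw [hsum]
  have hpt : ∀ x ∈ s, (((x + k).val : ℕ) : ℤ)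
      = ((x.val : ℤ) + k.val) - N * (if N ≤ x.val + k.val then 1 else 0) := by
    intro x _
    have hx := x.isLt
    have hk := k.isLt
    have hv : (x + k).val = (x.val + k.val) % N := by rw [Fin.add_def]
    split_ifs with h
    · have : (x.val + k.val) % N = x.val + k.val - N := by
        rw [Nat.mod_eq_sub_mod h, Nat.mod_eq_of_lt (by omega)]
      rw [hv, this]; omega
    · have : (x.val + k.val) % N = x.val + k.val := Nat.mod_eq_of_lt (by omega)
      rw [hv, this]; push_cast; ring
  rw [Finset.sum_congr rfl hpt, Finset.sum_sub_distrib, Finset.sum_add_distrib]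
  rw [Finset.sum_const, ← Finset.mul_sum]
  rw [Finset.sum_boole]
  simp [C, nsmul_eq_mul]

end Fredman
-- appended after base
namespace Fredman
variable {N : ℕ}

lemma filter_split_compl [NeZero N] (s : Finset (Fin N)) (p : Fin N) :
    (s.filter fun x => p.val < x.val).card + (sᶜ.filter fun x => p.val < x.val).card
      = N - 1 - p.val := by
  rw [← card_val_gt p]
  rw [← Finset.card_union_of_disjoint]
  · rw [← Finset.filter_union, Finset.union_compl]
  · exact Finset.disjoint_filter_filter disjoint_compl_right

lemma per_s_mem [NeZero N] (n m : ℕ) (hN : N = n + m) (s : Finset (Fin N)) (hs : s.card = n)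
    (α : ℤ) :
    ((univ : Finset (Fin N)).filter fun k =>
        top N ∈ shift k s ∧ (n:ℤ) ∣ C (shift k s) - α).card
      = ((range n).filter fun t : ℕ => (n:ℤ) ∣ (m:ℤ) * (t:ℤ) - (C s - α)).card := by
  have step1 : ((univ : Finset (Fin N)).filter fun k =>
        top N ∈ shift k s ∧ (n:ℤ) ∣ C (shift k s) - α).card
      = (s.filter fun p => (n:ℤ) ∣ C (shift (top N - p) s) - α).card := by
    apply Finset.card_bij' (fun k _ => top N - k) (fun p _ => top N - p)
    · intro k hk
      rw [mem_filter] at hk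
      obtain ⟨-, h1, h2⟩ := hk
      rw [mem_shift] at h1
      refine mem_filter.mpr ⟨h1, ?_⟩
      rwa [sub_sub_cancel]
    · intro p hp
      rw [mem_filter] at hp
      refine mem_filter.mpr ⟨mem_univ _, ?_, ?_⟩
      · rw [mem_shift, sub_sub_cancel]; exact hp.1
      · exact hp.2
    · intro k _; rw [sub_sub_cancel]
    · intro p _; rw [sub_sub_cancel]
  rw [step1]
  have key : ∀ p : Fin N, ((n:ℤ) ∣ C (shift (top N - p) s) - α) ↔
      ((n:ℤ) ∣ (m:ℤ) * ((s.filter fun x => p.val < x.val).card : ℤ) - (C s - α)) := by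
    intro p
    have hp := p.isLt
    have hval : (top N - p).val = N - 1 - p.val := top_sub_val p
    have hfil : (s.filter fun x => N ≤ x.val + (top N - p).val)
        = s.filter fun x => p.val < x.val := by
      apply Finset.filter_congr
      intro x _
      rw [hval]
      have := x.isLt
      constructor <;> intro <;> omega
    have hCeq : C (shift (top N - p) s) - α
        = (n:ℤ) * (((N:ℤ) - 1 - p.val) - ((s.filter fun x => p.val < x.val).card : ℤ))
          - ((m:ℤ) * ((s.filter fun x => p.val < x.val).card : ℤ) - (C s - α)) := by
      rw [C_shift, hfil, hs, hval]
      have h1 : ((N - 1 - p.val : ℕ) : ℤ) = (N:ℤ) - 1 - p.val := by omega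
      rw [h1]
      have h2 : (N : ℤ) = (n:ℤ) + m := by exact_mod_cast congrArg Nat.cast hN
      rw [h2]
      ring
    rw [hCeq, dvd_sub_right (dvd_mul_right _ _)]
  rw [Finset.filter_congr (fun p _ => (key p))]
  have := card_filter_count s (fun t : ℕ => (n:ℤ) ∣ (m:ℤ) * (t:ℤ) - (C s - α))
  rw [hs] at this
  exact this

lemma per_s_notmem [NeZero N] (n m : ℕ) (hN : N = n + m) (s : Finset (Fin N)) (hs : s.card = n)
    (β : ℤ) :
    ((univ : Finset (Fin N)).filter fun k =>
        top N ∉ shift k s ∧ (m:ℤ) ∣ C (shift k s) - β).card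
      = ((range m).filter fun t : ℕ => (m:ℤ) ∣ (n:ℤ) * (t:ℤ) + (C s - β)).card := by
  have hcompl : sᶜ.card = m := by
    rw [Finset.card_compl, hs, Fintype.card_fin]; omega
  have step1 : ((univ : Finset (Fin N)).filter fun k =>
        top N ∉ shift k s ∧ (m:ℤ) ∣ C (shift k s) - β).card
      = (sᶜ.filter fun p => (m:ℤ) ∣ C (shift (top N - p) s) - β).card := by
    apply Finset.card_bij' (fun k _ => top N - k) (fun p _ => top N - p)
    · intro k hk
      rw [mem_filter] at hk
      obtain ⟨-, h1, h2⟩ := hk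
      rw [mem_shift] at h1
      refine mem_filter.mpr ⟨by rwa [Finset.mem_compl], ?_⟩
      rwa [sub_sub_cancel]
    · intro p hp
      rw [mem_filter, Finset.mem_compl] at hp
      refine mem_filter.mpr ⟨mem_univ _, ?_, ?_⟩
      · rw [mem_shift, sub_sub_cancel]; exact hp.1
      · exact hp.2
    · intro k _; rw [sub_sub_cancel]
    · intro p _; rw [sub_sub_cancel]
  rw [step1]
  have key : ∀ p : Fin N, p ∈ sᶜ → (((m:ℤ) ∣ C (shift (top N - p) s) - β) ↔
      ((m:ℤ) ∣ (n:ℤ) * ((sᶜ.filter fun x => p.val < x.val).card : ℤ) + (C s - β))) := by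
    intro p _
    have hp := p.isLt
    have hval : (top N - p).val = N - 1 - p.val := top_sub_val p
    have hfil : (s.filter fun x => N ≤ x.val + (top N - p).val)
        = s.filter fun x => p.val < x.val := by
      apply Finset.filter_congr
      intro x _
      rw [hval]
      have := x.isLt
      constructor <;> intro <;> omega
    have hsplit := filter_split_compl s p
    have hCeq : C (shift (top N - p) s) - β
        = (m:ℤ) * (-((s.filter fun x => p.val < x.val).card : ℤ))
          + ((n:ℤ) * ((sᶜ.filter fun x => p.val < x.val).card : ℤ) + (C s - β)) := by
      rw [C_shift, hfil, hs, hval]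
      have h2 : (N : ℤ) = (n:ℤ) + m := by exact_mod_cast congrArg Nat.cast hN
      have h1 : ((N - 1 - p.val : ℕ) : ℤ)
          = ((s.filter fun x => p.val < x.val).card : ℤ)
            + ((sᶜ.filter fun x => p.val < x.val).card : ℤ) := by omega
      rw [h1, h2]
      ring
    rw [hCeq, dvd_add_right (dvd_mul_right (m:ℤ) _)]
  rw [Finset.filter_congr key]
  have := card_filter_count sᶜ (fun t : ℕ => (m:ℤ) ∣ (n:ℤ) * (t:ℤ) + (C s - β))
  rw [hcompl] at this
  exact this

end Fredman
namespace Fredman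
variable {N : ℕ}

lemma shift_zero [NeZero N] (s : Finset (Fin N)) : shift 0 s = s := by
  ext x
  simp only [shift, Finset.mem_map, addRightEmbedding_apply, add_zero]
  exact ⟨fun ⟨y, hy, h⟩ => h ▸ hy, fun h => ⟨x, h, rfl⟩⟩

lemma double_count [NeZero N] (n : ℕ) (P : Finset (Fin N) → Prop) [DecidablePred P] :
    N * (((univ : Finset (Finset (Fin N))).filter fun s => s.card = n ∧ P s).card)
      = ∑ s ∈ (univ : Finset (Finset (Fin N))).filter (fun s => s.card = n),
          ((univ : Finset (Fin N)).filter fun k => P (shift k s)).card := by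
  have hper : ∀ k : Fin N,
      (((univ : Finset (Finset (Fin N))).filter fun s => s.card = n ∧ P (shift k s))).card
        = ((univ : Finset (Finset (Fin N))).filter fun s => s.card = n ∧ P s).card := by
    intro k
    apply Finset.card_bij' (fun s _ => shift k s) (fun t _ => shift (-k) t)
    · intro s hs
      rw [mem_filter] at hs ⊢
      exact ⟨mem_univ _, by rw [card_shift]; exact hs.2.1, hs.2.2⟩
    · intro t ht
      rw [mem_filter] at ht ⊢
      refine ⟨mem_univ _, by rw [card_shift]; exact ht.2.1, ?_⟩
      rw [shift_shift, neg_add_cancel, shift_zero]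
      exact ht.2.2
    · intro s _
      rw [shift_neg_shift]
    · intro t _
      rw [shift_shift, neg_add_cancel, shift_zero]
  calc N * (((univ : Finset (Finset (Fin N))).filter fun s => s.card = n ∧ P s).card)
      = ∑ _k : Fin N, ((univ : Finset (Finset (Fin N))).filter fun s => s.card = n ∧ P s).card := by
        rw [Finset.sum_const, Finset.card_univ, Fintype.card_fin, smul_eq_mul]
    _ = ∑ k : Fin N, (((univ : Finset (Finset (Fin N))).filter fun s => s.card = n ∧ P (shift k s))).card := by
        exact Finset.sum_congr rfl fun k _ => (hper k).symm
    _ = ∑ k : Fin N, ∑ s ∈ (univ : Finset (Finset (Fin N))).filter (fun s => s.card = n),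
          (if P (shift k s) then 1 else 0) := by
        refine Finset.sum_congr rfl fun k _ => ?_
        rw [← Finset.filter_filter, Finset.card_filter]
    _ = ∑ s ∈ (univ : Finset (Finset (Fin N))).filter (fun s => s.card = n),
          ∑ k : Fin N, (if P (shift k s) then 1 else 0) := Finset.sum_comm
    _ = ∑ s ∈ (univ : Finset (Finset (Fin N))).filter (fun s => s.card = n),
          ((univ : Finset (Fin N)).filter fun k => P (shift k s)).card := by
        exact Finset.sum_congr rfl fun s _ => (Finset.card_filter _ _).symm

def rev [NeZero N] (s : Finset (Fin N)) : Finset (Fin N) :=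
  s.map ⟨fun x => top N - x, (show Function.Injective (fun x : Fin N => top N - x) from fun a b h => by
    have h2 := congrArg (fun y => top N - y) h
    simpa [sub_sub_cancel] using h2)⟩

lemma card_rev [NeZero N] (s : Finset (Fin N)) : (rev s).card = s.card := Finset.card_map _

lemma rev_rev [NeZero N] (s : Finset (Fin N)) : rev (rev s) = s := by
  ext x
  simp only [rev, Finset.mem_map, Function.Embedding.coeFn_mk]
  constructor
  · rintro ⟨y, ⟨z, hz, rfl⟩, rfl⟩; rwa [sub_sub_cancel]
  · intro hx; exact ⟨top N - x, ⟨x, hx, rfl⟩, by rw [sub_sub_cancel]⟩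

lemma C_rev [NeZero N] (s : Finset (Fin N)) :
    C (rev s) = (s.card : ℤ) * ((N:ℤ) - 1) - C s := by
  rw [C, rev, Finset.sum_map]
  simp only [Function.Embedding.coeFn_mk]
  have hpt : ∀ x ∈ s, (((top N - x).val : ℕ) : ℤ) = ((N:ℤ) - 1) - (x.val : ℤ) := by
    intro x _
    have := x.isLt
    have hN : N ≠ 0 := NeZero.ne N
    rw [top_sub_val]
    omega
  rw [Finset.sum_congr rfl hpt, Finset.sum_sub_distrib, Finset.sum_const, nsmul_eq_mul, C]

lemma sum_rev [NeZero N] (n : ℕ) (g : Finset (Fin N) → ℕ) :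
    ∑ s ∈ (univ : Finset (Finset (Fin N))).filter (fun s => s.card = n), g s
      = ∑ s ∈ (univ : Finset (Finset (Fin N))).filter (fun s => s.card = n), g (rev s) := by
  apply Finset.sum_bij' (fun s _ => rev s) (fun s _ => rev s) <;> intro s hs <;>
    first
      | (rw [rev_rev])
      | (rw [mem_filter] at hs ⊢; exact ⟨mem_univ _, by rw [card_rev]; exact hs.2⟩)

/-- key arithmetic helper for the `mini` bijection -/
lemma mini_mem (a b : ℕ) (ha : 0 < a) (hb : 0 < b) (c : ℤ) (t : ℕ) (ht : t < a)
    (hdvd : (a:ℤ) ∣ (b:ℤ) * t - c) :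
    ((((c - (b:ℤ)*t)/a) % b).toNat < b) ∧
      ((b:ℤ) ∣ (a:ℤ) * ((((c - (b:ℤ)*t)/a) % b).toNat : ℤ) - c) := by
  have hb' : (0:ℤ) < b := by exact_mod_cast hb
  have hdvd' : (a:ℤ) ∣ c - (b:ℤ)*t := by
    have := (dvd_neg (α := ℤ)).mpr hdvd
    rwa [neg_sub] at this
  set v := (c - (b:ℤ)*t)/a with hvdef
  have hv : (a:ℤ) * v = c - (b:ℤ)*t := Int.mul_ediv_cancel' hdvd'
  have h0 : 0 ≤ v % b := Int.emod_nonneg v (by exact_mod_cast hb.ne')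
  have hub : v % b < b := Int.emod_lt_of_pos v hb'
  refine ⟨by omega, ⟨-(t:ℤ) - (a:ℤ)*(v/b), ?_⟩⟩
  rw [Int.toNat_of_nonneg h0, Int.emod_def]
  linear_combination hv

lemma mini_inv (a b : ℕ) (ha : 0 < a) (hb : 0 < b) (c : ℤ) (t : ℕ) (ht : t < a)
    (hdvd : (a:ℤ) ∣ (b:ℤ) * t - c) :
    (((c - (a:ℤ) * (((((c - (b:ℤ)*t)/a) % b).toNat : ℕ) : ℤ)) / b) % a).toNat = t := by
  have hb' : (0:ℤ) < b := by exact_mod_cast hb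
  have hdvd' : (a:ℤ) ∣ c - (b:ℤ)*t := by
    have := (dvd_neg (α := ℤ)).mpr hdvd
    rwa [neg_sub] at this
  set v := (c - (b:ℤ)*t)/a with hvdef
  have hv : (a:ℤ) * v = c - (b:ℤ)*t := Int.mul_ediv_cancel' hdvd'
  have h0 : 0 ≤ v % b := Int.emod_nonneg v (by exact_mod_cast hb.ne')
  have key : c - (a:ℤ) * (((v % b).toNat : ℕ) : ℤ) = (b:ℤ) * ((t:ℤ) + (a:ℤ) * (v/b)) := by
    rw [Int.toNat_of_nonneg h0, Int.emod_def]
    linear_combination -hv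
  rw [key, Int.mul_ediv_cancel_left _ (by exact_mod_cast hb.ne' : (b:ℤ) ≠ 0),
    Int.add_mul_emod_self_left, Int.emod_eq_of_lt (by positivity) (by exact_mod_cast ht)]
  omega

lemma mini (a b : ℕ) (ha : 0 < a) (hb : 0 < b) (c : ℤ) :
    ((range a).filter fun t : ℕ => (a:ℤ) ∣ (b:ℤ) * t - c).card
      = ((range b).filter fun u : ℕ => (b:ℤ) ∣ (a:ℤ) * u - c).card := by
  apply Finset.card_bij' (fun (t : ℕ) (_ : t ∈ (range a).filter fun t : ℕ => (a:ℤ) ∣ (b:ℤ) * t - c) => (((c - (b:ℤ)*t)/a) % b).toNat)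
    (fun (u : ℕ) (_ : u ∈ (range b).filter fun u : ℕ => (b:ℤ) ∣ (a:ℤ) * u - c) => (((c - (a:ℤ)*u)/b) % a).toNat)
  case hi =>
    intro t ht
    simp only [mem_filter, mem_range] at ht ⊢
    obtain ⟨h1, h2⟩ := ht
    exact ⟨(mini_mem a b ha hb c t h1 h2).1, (mini_mem a b ha hb c t h1 h2).2⟩
  case hj =>
    intro u hu
    simp only [mem_filter, mem_range] at hu ⊢
    obtain ⟨h1, h2⟩ := hu
    exact ⟨(mini_mem b a hb ha c u h1 h2).1, (mini_mem b a hb ha c u h1 h2).2⟩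
  case left_inv =>
    intro t ht
    simp only [mem_filter, mem_range] at ht
    exact mini_inv a b ha hb c t ht.1 ht.2
  case right_inv =>
    intro u hu
    simp only [mem_filter, mem_range] at hu
    exact mini_inv b a hb ha c u hu.1 hu.2

end Fredman
namespace Fredman
open Fin.NatCast

def pos (a : ℕ) (l : Fin a → ℕ) (t : Fin a) : ℕ :=
  t.val + ∑ j ∈ (univ : Finset (Fin a)).filter (fun j => j ≤ t), l j

def F (a N : ℕ) [NeZero N] (l : Fin a → ℕ) : Finset (Fin N) :=
  (univ : Finset (Fin a)).image fun t => ((pos a l t : ℕ) : Fin N)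

section FLemmas

variable {a b N : ℕ} [NeZero N]

lemma psum_le {l : Fin a → ℕ} (hl : (∑ j, l j) = b) (t : Fin a) :
    ∑ j ∈ (univ : Finset (Fin a)).filter (fun j => j ≤ t), l j ≤ b := by
  rw [← hl]
  exact Finset.sum_le_sum_of_subset (Finset.filter_subset _ _)

lemma pos_lt (hN : N = a + b) {l : Fin a → ℕ} (hl : (∑ j, l j) = b) (t : Fin a) :
    pos a l t < N := by
  have h1 := psum_le hl t
  have h2 := t.isLt
  rw [pos]
  omega

lemma pos_strictMono (l : Fin a → ℕ) : StrictMono (pos a l) := by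
  intro t t' htt
  rw [pos, pos]
  have h1 : t.val < t'.val := htt
  have h2 : ∑ j ∈ (univ : Finset (Fin a)).filter (fun j => j ≤ t), l j
      ≤ ∑ j ∈ (univ : Finset (Fin a)).filter (fun j => j ≤ t'), l j := by
    apply Finset.sum_le_sum_of_subset
    intro j hj
    rw [mem_filter] at hj ⊢
    exact ⟨hj.1, le_trans hj.2 (le_of_lt htt)⟩
  omega

lemma val_F (hN : N = a + b) {l : Fin a → ℕ} (hl : (∑ j, l j) = b) (t : Fin a) :
    (((pos a l t : ℕ) : Fin N)).val = pos a l t :=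
  Fin.val_cast_of_lt (pos_lt hN hl t)

lemma F_point_inj (hN : N = a + b) {l : Fin a → ℕ} (hl : (∑ j, l j) = b) :
    Function.Injective (fun t => ((pos a l t : ℕ) : Fin N)) := by
  intro t t' h
  have h2 : pos a l t = pos a l t' := by
    have := congrArg Fin.val h
    rwa [val_F hN hl, val_F hN hl] at this
  exact (pos_strictMono l).injective h2

lemma card_F (hN : N = a + b) {l : Fin a → ℕ} (hl : (∑ j, l j) = b) :
    (F a N l).card = a := by
  rw [F, Finset.card_image_of_injective _ (F_point_inj hN hl), Finset.card_univ,
    Fintype.card_fin]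

lemma top_mem_F (ha : 1 ≤ a) (hN : N = a + b) {l : Fin a → ℕ} (hl : (∑ j, l j) = b) :
    top N ∈ F a N l := by
  have hlast : a - 1 < a := by omega
  rw [F, Finset.mem_image]
  refine ⟨⟨a - 1, hlast⟩, mem_univ _, ?_⟩
  have hfil : (univ : Finset (Fin a)).filter (fun j => j ≤ (⟨a - 1, hlast⟩ : Fin a)) = univ := by
    apply Finset.filter_true_of_mem
    intro j _
    rw [Fin.le_def]
    have := j.isLt
    simp only [Fin.val_mk]
    omega
  have hpos : pos a l ⟨a - 1, hlast⟩ = N - 1 := by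
    rw [pos, hfil, hl]
    simp only [Fin.val_mk]
    omega
  apply Fin.ext
  rw [val_F hN hl, hpos]
  rfl

lemma card_ge (ha : 1 ≤ a) (j : Fin a) :
    ((univ : Finset (Fin a)).filter fun t => j ≤ t).card = a - j.val := by
  haveI : NeZero a := ⟨by omega⟩
  have hins : (univ : Finset (Fin a)).filter (fun t => j ≤ t)
      = insert j ((univ : Finset (Fin a)).filter fun t => j.val < t.val) := by
    ext t
    simp only [Finset.mem_insert, mem_filter, mem_univ, true_and, Fin.le_def, Fin.ext_iff]
    omega
  rw [hins, Finset.card_insert_of_notMem (by simp), card_val_gt]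
  have := j.isLt
  omega

lemma C_F (ha : 1 ≤ a) (hN : N = a + b) {l : Fin a → ℕ} (hl : (∑ j, l j) = b) :
    C (F a N l) = (∑ t : Fin a, (t.val : ℤ)) + (a : ℤ) * b
      - (∑ j : Fin a, (j.val : ℤ) * (l j : ℤ)) := by
  rw [C, F, Finset.sum_image (fun x _ y _ h => F_point_inj hN hl h)]
  have hterm : ∀ t : Fin a, ((((pos a l t : ℕ) : Fin N)).val : ℤ)
      = (t.val : ℤ) + ∑ j ∈ (univ : Finset (Fin a)).filter (fun j => j ≤ t), (l j : ℤ) := by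
    intro t
    rw [val_F hN hl, pos]
    push_cast
    ring
  rw [Finset.sum_congr rfl (fun t _ => hterm t), Finset.sum_add_distrib]
  have hswap : (∑ t : Fin a, ∑ j ∈ (univ : Finset (Fin a)).filter (fun j => j ≤ t), (l j : ℤ))
      = ∑ j : Fin a, ((a : ℤ) - j.val) * (l j : ℤ) := by
    have h1 : ∀ t : Fin a, (∑ j ∈ (univ : Finset (Fin a)).filter (fun j => j ≤ t), (l j : ℤ))
        = ∑ j : Fin a, if j ≤ t then (l j : ℤ) else 0 := fun t =>
      (Finset.sum_filter _ _)
    rw [Finset.sum_congr rfl (fun t _ => h1 t), Finset.sum_comm]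
    refine Finset.sum_congr rfl fun j _ => ?_
    rw [← Finset.sum_filter, Finset.sum_const, card_ge ha j, nsmul_eq_mul]
    have := j.isLt
    have hc : ((a - j.val : ℕ) : ℤ) = (a : ℤ) - j.val := by omega
    rw [hc]
  rw [hswap]
  have hsum : (∑ j : Fin a, ((a : ℤ) - j.val) * (l j : ℤ))
      = (a : ℤ) * b - ∑ j : Fin a, (j.val : ℤ) * (l j : ℤ) := by
    have hcast : ((∑ j, l j : ℕ) : ℤ) = (b : ℤ) := by exact_mod_cast congrArg Nat.cast hl
    push_cast at hcast
    calc (∑ j : Fin a, ((a : ℤ) - j.val) * (l j : ℤ))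
        = (a:ℤ) * (∑ j : Fin a, (l j : ℤ)) - ∑ j : Fin a, (j.val : ℤ) * (l j : ℤ) := by
          rw [Finset.mul_sum, ← Finset.sum_sub_distrib]
          exact Finset.sum_congr rfl fun j _ => by ring
      _ = (a : ℤ) * b - ∑ j : Fin a, (j.val : ℤ) * (l j : ℤ) := by rw [hcast]
  rw [hsum]
  ring

end FLemmas

end Fredman
namespace Fredman
open Fin.NatCast

section FBij

variable {a b N : ℕ} [NeZero N]

lemma F_strictMono (hN : N = a + b) {l : Fin a → ℕ} (hl : (∑ j, l j) = b) :
    StrictMono (fun t => ((pos a l t : ℕ) : Fin N)) := by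
  intro t t' h
  rw [Fin.lt_def, val_F hN hl, val_F hN hl]
  exact pos_strictMono l h

lemma F_inj (ha : 1 ≤ a) (hN : N = a + b) {l l' : Fin a → ℕ} (hl : (∑ j, l j) = b)
    (hl' : (∑ j, l' j) = b) (h : F a N l = F a N l') : l = l' := by
  have hc : (F a N l).card = a := card_F hN hl
  have f1 : OrderEmbedding.ofStrictMono _ (F_strictMono hN hl) = (F a N l).orderEmbOfFin hc := by
    apply Finset.orderEmbOfFin_unique' hc
    intro x
    exact Finset.mem_image.mpr ⟨x, mem_univ _, rfl⟩
  have f2 : OrderEmbedding.ofStrictMono _ (F_strictMono hN hl') = (F a N l).orderEmbOfFin hc := by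
    apply Finset.orderEmbOfFin_unique' hc
    intro x
    rw [h]
    exact Finset.mem_image.mpr ⟨x, mem_univ _, rfl⟩
  have hpos : ∀ t : Fin a, pos a l t = pos a l' t := by
    intro t
    have := congrArg (fun (f : Fin a ↪o Fin N) => (f t).val) (f1.trans f2.symm)
    simpa [OrderEmbedding.ofStrictMono, val_F hN hl, val_F hN hl'] using this
  funext t
  rcases Nat.eq_zero_or_pos t.val with h0 | h0
  · have hfil : (univ : Finset (Fin a)).filter (fun j => j ≤ t) = {t} := by
      ext j
      simp only [mem_filter, mem_univ, true_and, Finset.mem_singleton, Fin.le_def, Fin.ext_iff]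
      omega
    have := hpos t
    rw [pos, pos, hfil, Finset.sum_singleton, Finset.sum_singleton] at this
    omega
  · have hlt : t.val - 1 < a := by have := t.isLt; omega
    set tp : Fin a := ⟨t.val - 1, hlt⟩ with htp
    have hfil : (univ : Finset (Fin a)).filter (fun j => j ≤ t)
        = insert t ((univ : Finset (Fin a)).filter (fun j => j ≤ tp)) := by
      ext j
      simp only [mem_filter, mem_univ, true_and, Finset.mem_insert, Fin.le_def, Fin.ext_iff, htp]
      omega
    have hnm : t ∉ (univ : Finset (Fin a)).filter (fun j => j ≤ tp) := by
      simp only [mem_filter, mem_univ, true_and, Fin.le_def, htp]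
      omega
    have h1 := hpos t
    have h2 := hpos tp
    rw [pos, pos, hfil, Finset.sum_insert hnm, Finset.sum_insert hnm] at h1
    rw [pos, pos] at h2
    omega

lemma F_surj (ha : 1 ≤ a) (hN : N = a + b) (s : Finset (Fin N)) (hcard : s.card = a)
    (htop : top N ∈ s) : ∃ l : Fin a → ℕ, (∑ j, l j) = b ∧ F a N l = s := by
  have hN0 : N ≠ 0 := NeZero.ne N
  set e := s.orderEmbOfFin hcard with he
  set l : Fin a → ℕ := fun t =>
    if t.val = 0 then (e t).val
    else (e t).val - (e ⟨t.val - 1, by have := t.isLt; omega⟩).val - 1 with hldef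
  have emono : ∀ u v : Fin a, u < v → (e u).val < (e v).val := by
    intro u v huv
    exact (s.orderEmbOfFin hcard).strictMono huv
  -- partial sums
  have hind : ∀ k (hk : k < a), k ≤ (e ⟨k, hk⟩).val ∧
      (∑ j ∈ (univ : Finset (Fin a)).filter (fun j => j ≤ (⟨k, hk⟩ : Fin a)), l j)
        = (e ⟨k, hk⟩).val - k := by
    intro k
    induction k with
    | zero =>
      intro hk
      have hfil : (univ : Finset (Fin a)).filter (fun j => j ≤ (⟨0, hk⟩ : Fin a))
          = {(⟨0, hk⟩ : Fin a)} := by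
        ext j
        simp only [mem_filter, mem_univ, true_and, Finset.mem_singleton, Fin.le_def, Fin.ext_iff]
        omega
      rw [hfil, Finset.sum_singleton]
      simp only [hldef]
      simp
    | succ k ih =>
      intro hk
      have hk' : k < a := by omega
      obtain ⟨ih1, ih2⟩ := ih hk'
      have hstep : (e ⟨k, hk'⟩).val < (e ⟨k+1, hk⟩).val := emono _ _ (by simp [Fin.lt_def])
      have hfil : (univ : Finset (Fin a)).filter (fun j => j ≤ (⟨k+1, hk⟩ : Fin a))
          = insert (⟨k+1, hk⟩ : Fin a)
              ((univ : Finset (Fin a)).filter (fun j => j ≤ (⟨k, hk'⟩ : Fin a))) := by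
        ext j
        simp only [mem_filter, mem_univ, true_and, Finset.mem_insert, Fin.le_def, Fin.ext_iff]
        omega
      have hnm : (⟨k+1, hk⟩ : Fin a) ∉
          (univ : Finset (Fin a)).filter (fun j => j ≤ (⟨k, hk'⟩ : Fin a)) := by
        simp only [mem_filter, mem_univ, true_and, Fin.le_def]
        omega
      have hlval : l ⟨k+1, hk⟩ = (e ⟨k+1, hk⟩).val - (e ⟨k, hk'⟩).val - 1 := by
        simp only [hldef]
        rfl
      constructor
      · omega
      · rw [hfil, Finset.sum_insert hnm, ih2, hlval]
        omega
  -- position function equals e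
  have hpos : ∀ t : Fin a, pos a l t = (e t).val := by
    intro t
    obtain ⟨h1, h2⟩ := hind t.val t.isLt
    rw [pos]
    have : (⟨t.val, t.isLt⟩ : Fin a) = t := Fin.eta t t.isLt
    rw [this] at h1 h2
    omega
  -- last element is top
  have hlast : a - 1 < a := by omega
  have helast : (e ⟨a - 1, hlast⟩).val = N - 1 := by
    have h1 : top N ∈ (s : Set (Fin N)) := htop
    rw [← Finset.range_orderEmbOfFin s hcard] at h1
    obtain ⟨t0, ht0⟩ := h1
    have h2 : e t0 ≤ e ⟨a - 1, hlast⟩ := by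
      apply (s.orderEmbOfFin hcard).le_iff_le.mpr
      rw [Fin.le_def]
      have := t0.isLt
      simp only [Fin.val_mk]
      omega
    have h3 : (e ⟨a - 1, hlast⟩).val ≤ N - 1 := by
      have := (e ⟨a - 1, hlast⟩).isLt
      omega
    rw [ht0] at h2
    rw [Fin.le_def] at h2
    have h4 : (top N).val = N - 1 := rfl
    omega
  have hsum : (∑ j, l j) = b := by
    have hfil : (univ : Finset (Fin a)).filter (fun j => j ≤ (⟨a - 1, hlast⟩ : Fin a))
        = univ := by
      apply Finset.filter_true_of_mem
      intro j _
      rw [Fin.le_def]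
      have := j.isLt
      simp only [Fin.val_mk]
      omega
    obtain ⟨h1, h2⟩ := hind (a-1) hlast
    rw [hfil] at h2
    rw [h2, helast]
    omega
  refine ⟨l, hsum, ?_⟩
  rw [F]
  have himg : ∀ t : Fin a, ((pos a l t : ℕ) : Fin N) = e t := by
    intro t
    rw [hpos t, Fin.cast_val_eq_self]
  rw [Finset.image_congr (fun t _ => himg t)]
  -- image of univ under e is s
  apply Finset.eq_of_subset_of_card_le
  · intro x hx
    rw [Finset.mem_image] at hx
    obtain ⟨t, _, rfl⟩ := hx
    exact Finset.orderEmbOfFin_mem s hcard t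
  · rw [hcard, Finset.card_image_of_injective _ (s.orderEmbOfFin hcard).injective,
      Finset.card_univ, Fintype.card_fin]

end FBij

end Fredman
namespace Fredman

lemma tuple_count (a b N : ℕ) (ha : 1 ≤ a) (hb : 1 ≤ b) (hN : N = a + b) [NeZero N] (γ : ℤ) :
    Nat.card {l : Fin a → ℕ //
      (∑ j, l j) = b ∧ (∑ j : Fin a, (j : ℤ) * (l j : ℤ)) ≡ γ [ZMOD (a : ℤ)]} =
    ((univ : Finset (Finset (Fin N))).filter fun s =>
      s.card = a ∧ top N ∈ s ∧
        (a:ℤ) ∣ C s - ((∑ t : Fin a, (t.val:ℤ)) + (a:ℤ) * b - γ)).card := by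
  classical
  set K : ℤ := (∑ t : Fin a, (t.val:ℤ)) + (a:ℤ) * b - γ with hK
  set S₀ : Finset (Fin a → ℕ) := Fintype.piFinset fun _ : Fin a => range (b+1) with hS₀
  set P' : (Fin a → ℕ) → Prop :=
    fun l => (∑ j, l j) = b ∧ (a:ℤ) ∣ γ - (∑ j : Fin a, (j.val : ℤ) * (l j : ℤ)) with hP'
  have hA : Nat.card {l : Fin a → ℕ //
      (∑ j, l j) = b ∧ (∑ j : Fin a, (j : ℤ) * (l j : ℤ)) ≡ γ [ZMOD (a : ℤ)]}
      = (S₀.filter P').card := by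
    rw [← Nat.card_eq_finsetCard]
    apply Nat.card_congr
    apply Equiv.subtypeEquivRight
    intro l
    constructor
    · rintro ⟨h1, h2⟩
      rw [Finset.mem_filter]
      refine ⟨?_, h1, ?_⟩
      · rw [Fintype.mem_piFinset]
        intro j
        rw [mem_range]
        have hle : l j ≤ ∑ j', l j' :=
          Finset.single_le_sum (fun _ _ => Nat.zero_le _) (mem_univ j)
        rw [h1] at hle
        omega
      · exact (Int.modEq_iff_dvd).mp h2
    · intro hmem
      rw [Finset.mem_filter] at hmem
      exact ⟨hmem.2.1, (Int.modEq_iff_dvd).mpr hmem.2.2⟩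
  rw [hA]
  apply Finset.card_bij (fun l _ => F a N l)
  · intro l hl
    rw [Finset.mem_filter] at hl
    obtain ⟨-, h1, h2⟩ := hl
    rw [Finset.mem_filter]
    refine ⟨mem_univ _, card_F hN h1, top_mem_F ha hN h1, ?_⟩
    have hC : C (F a N l) - K = γ - (∑ j : Fin a, (j.val : ℤ) * (l j : ℤ)) := by
      rw [C_F ha hN h1, hK]; ring
    rw [hC]
    exact h2
  · intro l hl l' hl' h
    rw [Finset.mem_filter] at hl hl'
    exact F_inj ha hN hl.2.1 hl'.2.1 h
  · intro s hs
    rw [Finset.mem_filter] at hs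
    obtain ⟨-, hcard, htop, hdvd⟩ := hs
    obtain ⟨l, hsum, hFl⟩ := F_surj ha hN s hcard htop
    have hmem : l ∈ S₀.filter P' := by
      rw [Finset.mem_filter]
      refine ⟨?_, hsum, ?_⟩
      · rw [Fintype.mem_piFinset]
        intro j
        rw [mem_range]
        have hle : l j ≤ ∑ j', l j' :=
          Finset.single_le_sum (fun _ _ => Nat.zero_le _) (mem_univ j)
        rw [hsum] at hle
        exact Nat.lt_succ_of_le hle
      · have hC : C (F a N l) - K = γ - (∑ j : Fin a, (j.val : ℤ) * (l j : ℤ)) := by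
          rw [C_F ha hN hsum, hK]; ring
        rw [hFl] at hC
        rw [← hC]
        exact hdvd
    exact ⟨l, hmem, hFl⟩

end Fredman
namespace Fredman

lemma C_compl {N : ℕ} [NeZero N] (s : Finset (Fin N)) :
    C sᶜ = (∑ x : Fin N, (x.val : ℤ)) - C s := by
  have h := Finset.sum_add_sum_compl s (fun x : Fin N => (x.val : ℤ))
  rw [C, C]
  linarith

lemma compl_count (n m N : ℕ) (hN : N = n + m) [NeZero N] (K : ℤ) :
    ((univ : Finset (Finset (Fin N))).filter fun s =>
        s.card = m ∧ top N ∈ s ∧ (m:ℤ) ∣ C s - K).card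
      = ((univ : Finset (Finset (Fin N))).filter fun s =>
        s.card = n ∧ top N ∉ s ∧
          (m:ℤ) ∣ C s - ((∑ x : Fin N, (x.val : ℤ)) - K)).card := by
  apply Finset.card_bij' (fun s _ => sᶜ) (fun s _ => sᶜ)
  case hi =>
    intro s hs
    rw [mem_filter] at hs ⊢
    obtain ⟨-, h1, h2, h3⟩ := hs
    refine ⟨mem_univ _, ?_, ?_, ?_⟩
    · rw [Finset.card_compl, h1, Fintype.card_fin]; omega
    · rw [Finset.mem_compl]; exact fun hc => hc h2
    · rw [C_compl]
      have heq : (∑ x : Fin N, (x.val : ℤ)) - C s - ((∑ x : Fin N, (x.val : ℤ)) - K)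
          = -(C s - K) := by ring
      rw [heq]
      exact dvd_neg.mpr h3
  case hj =>
    intro s hs
    rw [mem_filter] at hs ⊢
    obtain ⟨-, h1, h2, h3⟩ := hs
    refine ⟨mem_univ _, ?_, ?_, ?_⟩
    · rw [Finset.card_compl, h1, Fintype.card_fin]; omega
    · rw [Finset.mem_compl]; exact h2
    · rw [C_compl]
      have heq : (∑ x : Fin N, (x.val : ℤ)) - C s - K
          = -(C s - ((∑ x : Fin N, (x.val : ℤ)) - K)) := by ring
      rw [heq]
      exact dvd_neg.mpr h3
  case left_inv => intro s _; exact compl_compl s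
  case right_inv => intro s _; exact compl_compl s

lemma counts_eq (n m N : ℕ) (hn : 1 ≤ n) (hm : 1 ≤ m) (hN : N = n + m) [NeZero N]
    (α β : ℤ) (hkey : α + β = (n:ℤ) * ((N:ℤ) - 1)) :
    ((univ : Finset (Finset (Fin N))).filter fun s =>
        s.card = n ∧ top N ∈ s ∧ (n:ℤ) ∣ C s - α).card
      = ((univ : Finset (Finset (Fin N))).filter fun s =>
        s.card = n ∧ top N ∉ s ∧ (m:ℤ) ∣ C s - β).card := by
  have h0 : 0 < N := by omega
  apply Nat.eq_of_mul_eq_mul_left h0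
  have hdc1 := double_count (N := N) n (fun s => top N ∈ s ∧ (n:ℤ) ∣ C s - α)
  have hdc2 := double_count (N := N) n (fun s => top N ∉ s ∧ (m:ℤ) ∣ C s - β)
  refine Eq.trans hdc1 (Eq.trans ?_ hdc2.symm)
  calc ∑ s ∈ (univ : Finset (Finset (Fin N))).filter (fun s => s.card = n),
        ((univ : Finset (Fin N)).filter fun k =>
          top N ∈ shift k s ∧ (n:ℤ) ∣ C (shift k s) - α).card
      = ∑ s ∈ (univ : Finset (Finset (Fin N))).filter (fun s => s.card = n),
        ((range n).filter fun t : ℕ => (n:ℤ) ∣ (m:ℤ) * (t:ℤ) - (C s - α)).card := by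
        refine Finset.sum_congr rfl fun s hs => ?_
        exact per_s_mem n m hN s (mem_filter.mp hs).2 α
    _ = ∑ s ∈ (univ : Finset (Finset (Fin N))).filter (fun s => s.card = n),
        ((range m).filter fun t : ℕ => (m:ℤ) ∣ (n:ℤ) * (t:ℤ) - (C s - α)).card := by
        exact Finset.sum_congr rfl fun s _ => mini n m hn hm (C s - α)
    _ = ∑ s ∈ (univ : Finset (Finset (Fin N))).filter (fun s => s.card = n),
        ((range m).filter fun t : ℕ => (m:ℤ) ∣ (n:ℤ) * (t:ℤ) + (C (rev s) - β)).card := by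
        refine Finset.sum_congr rfl fun s hs => ?_
        have hcard := (mem_filter.mp hs).2
        refine congrArg Finset.card (Finset.filter_congr fun t _ => ?_)
        have heq : (n:ℤ) * (t:ℤ) + (C (rev s) - β) = (n:ℤ) * (t:ℤ) - (C s - α) := by
          rw [C_rev, hcard]
          linear_combination -hkey
        rw [heq]
    _ = ∑ s ∈ (univ : Finset (Finset (Fin N))).filter (fun s => s.card = n),
        ((range m).filter fun t : ℕ => (m:ℤ) ∣ (n:ℤ) * (t:ℤ) + (C s - β)).card := by
        exact (sum_rev n fun s =>
          ((range m).filter fun t : ℕ => (m:ℤ) ∣ (n:ℤ) * (t:ℤ) + (C s - β)).card).symm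
    _ = ∑ s ∈ (univ : Finset (Finset (Fin N))).filter (fun s => s.card = n),
        ((univ : Finset (Fin N)).filter fun k =>
          top N ∉ shift k s ∧ (m:ℤ) ∣ C (shift k s) - β).card := by
        refine Finset.sum_congr rfl fun s hs => ?_
        exact (per_s_notmem n m hN s (mem_filter.mp hs).2 β).symm

end Fredman
open Fredman in
/-- Fredman's reciprocity: for `n, m ≥ 1` and any integer `i`, the number of tuples
`(λ_0,…,λ_{n-1})` of nonnegative integers with `Σ λ_j = m` and `Σ j·λ_j ≡ i (mod n)`
equals the number of tuples `(μ_0,…,μ_{m-1})` of nonnegative integers with `Σ μ_j = n`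
and `Σ j·μ_j ≡ i (mod m)`. -/
theorem fredman_reciprocity (n m : ℕ) (hn : 1 ≤ n) (hm : 1 ≤ m) (i : ℤ) :
    Nat.card {l : Fin n → ℕ //
      (∑ j, l j) = m ∧ (∑ j : Fin n, (j : ℤ) * (l j : ℤ)) ≡ i [ZMOD (n : ℤ)]} =
    Nat.card {l : Fin m → ℕ //
      (∑ j, l j) = n ∧ (∑ j : Fin m, (j : ℤ) * (l j : ℤ)) ≡ i [ZMOD (m : ℤ)]} := by
  haveI : NeZero (n + m) := ⟨by omega⟩
  have h1 := tuple_count n m (n + m) hn hm rfl i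
  have h2 := tuple_count m n (n + m) hm hn (Nat.add_comm n m) i
  rw [h1, h2]
  rw [compl_count n m (n + m) rfl ((∑ t : Fin m, (t.val:ℤ)) + (m:ℤ) * n - i)]
  apply counts_eq n m (n + m) hn hm rfl
  -- key constant identity
  have g1 : 2 * (∑ t : Fin n, (t.val : ℤ)) = (n:ℤ) * n - n := by
    rw [Fin.sum_univ_eq_sum_range (fun j : ℕ => (j:ℤ)) n]
    exact gauss n
  have g2 : 2 * (∑ t : Fin m, (t.val : ℤ)) = (m:ℤ) * m - m := by
    rw [Fin.sum_univ_eq_sum_range (fun j : ℕ => (j:ℤ)) m]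
    exact gauss m
  have g3 : 2 * (∑ x : Fin (n + m), (x.val : ℤ)) = ((n+m:ℕ):ℤ) * ((n+m:ℕ):ℤ) - ((n+m:ℕ):ℤ) := by
    rw [Fin.sum_univ_eq_sum_range (fun j : ℕ => (j:ℤ)) (n+m)]
    exact gauss (n+m)
  push_cast at g3 ⊢
  linarith [g1, g2, g3]
end

section
/- Let p, q, m be nonnegative integers with q+m ≥ 1 and p+m ≥ 1, and let i be an integer. Then T_i(q+m, p, m) = T_i(p+m, q, m); that is, the number of pairs (λ, J) with λ a tuple of q+m nonnegative integers summing to p, J an m-element subset of {0, …, q+m−1}, and Σ_j j·λ_j + Σ_{j∈J} j ≡ i (mod q+m), equals the number of pairs (μ, K) with μ a tuple of p+m nonnegative integers summing to q, K an m-element subset of {0, …, p+m−1}, and Σ_j j·μ_j + Σ_{j∈K} j ≡ i (mod p+m). -/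
open Finset

namespace GFR

inductive L3 where | A | B | C deriving DecidableEq, Repr

open L3

def isBar : L3 → Bool | A => false | _ => true
def isAC : L3 → Bool | B => false | _ => true

abbrev cBar (w : List L3) : ℕ := w.countP isBar
abbrev cAC (w : List L3) : ℕ := w.countP isAC

def stat : List L3 → ℕ
  | [] => 0
  | x :: t => (if isBar x then cAC t else 0) + stat t

@[simp] lemma stat_nil : stat [] = 0 := rfl
@[simp] lemma stat_cons (x : L3) (t : List L3) :
    stat (x :: t) = (if isBar x then cAC t else 0) + stat t := rfl

lemma stat_append (u v : List L3) :
    stat (u ++ v) = stat u + cBar u * cAC v + stat v := by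
  induction u with
  | nil => simp
  | cons x t ih =>
      simp only [List.cons_append, stat_cons, ih, List.countP_cons, cAC, cBar,
        List.countP_append]
      cases hx : isBar x <;> simp [hx] <;> ring

lemma len3 (w : List L3) :
    w.length = w.count A + w.count B + w.count C := by
  induction w with
  | nil => simp
  | cons x t ih =>
      cases x <;> simp [List.count_cons, ih] <;> ring

lemma cBar_eq (w : List L3) : cBar w = w.count B + w.count C := by
  induction w with
  | nil => simp
  | cons x t ih =>
      cases x <;> simp [List.count_cons, List.countP_cons, ih, isBar] <;> ring

lemma cAC_eq (w : List L3) : cAC w = w.count A + w.count C := by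
  induction w with
  | nil => simp
  | cons x t ih =>
      cases x <;> simp [List.count_cons, List.countP_cons, ih, isAC] <;> ring

def base (p q m : ℕ) : List L3 :=
  List.replicate p A ++ List.replicate q B ++ List.replicate m C

def WordsF (p q m : ℕ) : Finset (List L3) := (base p q m).permutations.toFinset

lemma mem_WordsF {p q m : ℕ} {w : List L3} :
    w ∈ WordsF p q m ↔ w.count A = p ∧ w.count B = q ∧ w.count C = m := by
  rw [WordsF, List.mem_toFinset, List.mem_permutations, List.perm_iff_count]
  constructor
  · intro h
    refine ⟨?_, ?_, ?_⟩ <;> · rw [h]; simp [base, List.count_append, List.count_replicate]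
  · rintro ⟨hA, hB, hC⟩ a
    cases a <;> simp [base, List.count_append, List.count_replicate, hA, hB, hC]

def endsBar : List L3 → Bool
  | [] => false
  | [x] => isBar x
  | _ :: y :: t => endsBar (y :: t)

@[simp] lemma endsBar_nil : endsBar [] = false := rfl
@[simp] lemma endsBar_single (x : L3) : endsBar [x] = isBar x := rfl
@[simp] lemma endsBar_cons_cons (x y : L3) (t : List L3) :
    endsBar (x :: y :: t) = endsBar (y :: t) := rfl

lemma endsBar_append (u v : List L3) (hv : v ≠ []) :
    endsBar (u ++ v) = endsBar v := by
  induction u with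
  | nil => rfl
  | cons x t ih =>
      have : t ++ v ≠ [] := by simp [hv]
      obtain ⟨y, r, hr⟩ := List.exists_cons_of_ne_nil this
      rw [List.cons_append, hr, endsBar_cons_cons, ← hr, ih]

def enc : List (ℕ × Bool) → List L3
  | [] => []
  | (a, b) :: t => List.replicate a A ++ ((if b then C else B) :: enc t)

def dec : List L3 → List (ℕ × Bool)
  | [] => []
  | A :: t => match dec t with
      | [] => []
      | (a, b) :: r => (a + 1, b) :: r
  | B :: t => (0, false) :: dec t
  | C :: t => (0, true) :: dec t

def wt : List (ℕ × Bool) → ℕ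
  | [] => 0
  | (_, _) :: t => (t.map (fun y => y.1 + cond y.2 1 0)).sum + wt t

lemma dec_enc (L : List (ℕ × Bool)) : dec (enc L) = L := by
  induction L with
  | nil => rfl
  | cons x t ih =>
      obtain ⟨a, b⟩ := x
      induction a with
      | zero =>
          cases b <;> simp [enc, dec, ih]
      | succ a iha =>
          have h1 : enc ((a+1, b) :: t) = A :: enc ((a, b) :: t) := by
            simp [enc, List.replicate_succ]
          rw [h1]
          have h2 : dec (enc ((a, b) :: t)) = (a, b) :: t := iha
          show dec (A :: enc ((a,b) :: t)) = _
          rw [dec, h2]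



@[simp] lemma count_A_enc (L : List (ℕ × Bool)) :
    (enc L).count A = (L.map Prod.fst).sum := by
  induction L with
  | nil => rfl
  | cons x t ih =>
      obtain ⟨a, b⟩ := x
      cases b <;> simp [enc, List.count_append, List.count_replicate, List.count_cons, ih]

@[simp] lemma count_B_enc (L : List (ℕ × Bool)) :
    (enc L).count B = L.countP (fun y => !y.2) := by
  induction L with
  | nil => rfl
  | cons x t ih =>
      obtain ⟨a, b⟩ := x
      cases b <;> simp [enc, List.count_append, List.count_replicate, List.count_cons,
        List.countP_cons, ih]

@[simp] lemma count_C_enc (L : List (ℕ × Bool)) :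
    (enc L).count C = L.countP (fun y => y.2) := by
  induction L with
  | nil => rfl
  | cons x t ih =>
      obtain ⟨a, b⟩ := x
      cases b <;> simp [enc, List.count_append, List.count_replicate, List.count_cons,
        List.countP_cons, ih]

lemma cTrue_eq (L : List (ℕ × Bool)) :
    L.countP (fun y => y.2) = (L.map (fun y => (cond y.2 1 0 : ℕ))).sum := by
  induction L with
  | nil => rfl
  | cons x t ih => cases hb : x.2 <;> simp [List.countP_cons, hb, ih] <;> omega

lemma map_add_sum (L : List (ℕ × Bool)) :
    (L.map (fun y => y.1 + cond y.2 1 0)).sum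
      = (L.map Prod.fst).sum + (L.map (fun y => (cond y.2 1 0 : ℕ))).sum := by
  induction L with
  | nil => rfl
  | cons x t ih => simp [ih]; ring

lemma cAC_enc (L : List (ℕ × Bool)) :
    cAC (enc L) = (L.map (fun y => y.1 + cond y.2 1 0)).sum := by
  rw [cAC_eq, count_A_enc, count_C_enc, cTrue_eq, map_add_sum]

lemma stat_enc (L : List (ℕ × Bool)) : stat (enc L) = wt L := by
  induction L with
  | nil => rfl
  | cons x t ih =>
      obtain ⟨a, b⟩ := x
      have hA : ∀ (v : List L3), stat (List.replicate a A ++ v) = stat v := by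
        intro v
        rw [stat_append]
        simp [cBar, List.countP_replicate, isBar]
        induction a with
        | zero => rfl
        | succ a iha => simpa [List.replicate_succ, isBar] using iha
      rw [enc, hA]
      cases b <;> simp [wt, isBar, cAC_enc, ih]

lemma length_dec (w : List L3) : (dec w).length = cBar w := by
  induction w with
  | nil => rfl
  | cons x t ih =>
      cases x
      · rw [dec]
        rcases h : dec t with _ | ⟨⟨a, b⟩, r⟩ <;>
          simp_all [List.countP_cons, isBar]
      · simp [dec, List.countP_cons, isBar, ih]
      · simp [dec, List.countP_cons, isBar, ih]

lemma one_le_cBar_of_endsBar {w : List L3} (h : endsBar w = true) : 1 ≤ cBar w := by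
  induction w with
  | nil => simp at h
  | cons x t ih =>
      rcases t with _ | ⟨y, r⟩
      · simp only [endsBar_single] at h
        simp [List.countP_cons, h]
      · rw [endsBar_cons_cons] at h
        have := ih h
        simp only [cBar, List.countP_cons] at this ⊢
        omega

lemma enc_dec {w : List L3} (h : endsBar w = true) : enc (dec w) = w := by
  induction w with
  | nil => simp at h
  | cons x t ih =>
      rcases t with _ | ⟨y, r⟩
      · simp only [endsBar_single] at h
        cases x <;> simp_all [isBar, dec, enc]
      · have hET : endsBar (y :: r) = true := by rwa [endsBar_cons_cons] at h
        have iht := ih hET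
        cases x
        · have hd : dec (y :: r) ≠ [] := by
            have h1 := one_le_cBar_of_endsBar hET
            have h2 := length_dec (y :: r)
            intro hc; rw [hc] at h2; simp at h2; omega
          obtain ⟨⟨a, b⟩, r', hr'⟩ := List.exists_cons_of_ne_nil hd
          show enc (dec (A :: y :: r)) = A :: y :: r
          rw [dec, hr']
          have he : enc ((a + 1, b) :: r') = A :: enc ((a, b) :: r') := by
            simp [enc, List.replicate_succ]
          rw [he, ← hr', iht]
        · show enc (dec (B :: y :: r)) = B :: y :: r
          rw [dec]; simp [enc, iht]
        · show enc (dec (C :: y :: r)) = C :: y :: r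
          rw [dec]; simp [enc, iht]

lemma enc_ne_nil {L : List (ℕ × Bool)} (h : L ≠ []) : enc L ≠ [] := by
  obtain ⟨⟨a, b⟩, t, rfl⟩ := List.exists_cons_of_ne_nil h
  simp [enc]

lemma endsBar_enc {L : List (ℕ × Bool)} (h : L ≠ []) : endsBar (enc L) = true := by
  induction L with
  | nil => simp at h
  | cons x t ih =>
      obtain ⟨a, b⟩ := x
      rw [enc]
      rcases t with _ | ⟨y, r⟩
      · rw [endsBar_append _ _ (by simp)]
        cases b <;> simp [enc, isBar]
      · have h1 : enc (y :: r) ≠ [] := enc_ne_nil (by simp)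
        obtain ⟨z, s, hz⟩ := List.exists_cons_of_ne_nil h1
        rw [endsBar_append _ _ (by simp), hz, endsBar_cons_cons, ← hz,
          ih (by simp)]


lemma sum_fin_getD {α : Type*} (g : α → ℕ) (d : α) :
    ∀ (l : List α), ∑ j : Fin l.length, g (l.getD j d) = (l.map g).sum := by
  intro l
  induction l with
  | nil => simp
  | cons x t ih =>
      rw [show (x :: t).length = t.length + 1 from rfl, Fin.sum_univ_succ]
      simp [ih]

lemma wt_eq_sum (l : List (ℕ × Bool)) :
    wt l = ∑ j : Fin l.length, (j : ℕ) * ((l.getD j (0, false)).1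
      + cond (l.getD j (0, false)).2 1 0) := by
  induction l with
  | nil => simp [wt]
  | cons x t ih =>
      rw [show (x :: t).length = t.length + 1 from rfl, Fin.sum_univ_succ]
      simp only [List.getD_cons_zero, List.getD_cons_succ, Fin.val_succ, Fin.val_zero,
        zero_mul, zero_add]
      obtain ⟨a, b⟩ := x
      rw [wt, ih]
      rw [← sum_fin_getD (fun y => y.1 + cond y.2 1 0) (0, false) t]
      rw [← Finset.sum_add_distrib]
      apply Finset.sum_congr rfl
      intro j _
      ring

lemma ofFn_getD {α : Type*} (d : α) :
    ∀ (l : List α), List.ofFn (fun j : Fin l.length => l.getD j d) = l := by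
  intro l
  induction l with
  | nil => simp
  | cons x t ih =>
      rw [List.ofFn_succ]
      simp [ih]



noncomputable def solCount (c a : ℕ) (s : ℤ) : ℕ :=
  Nat.card {u : ZMod c // (a : ZMod c) * u = (s : ZMod c)}

def fmap (s : ℤ) (c a : ℕ) (u : ZMod c) : ZMod a :=
  (((s - (a : ℤ) * (u.val : ℤ)) / (c : ℤ) : ℤ) : ZMod a)

lemma fmap_spec (s : ℤ) {c a : ℕ} [NeZero c] [NeZero a] (u : ZMod c)
    (hu : (a : ZMod c) * u = (s : ZMod c)) :
    (c : ZMod a) * fmap s c a u = (s : ZMod a) ∧ fmap s a c (fmap s c a u) = u := by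
  have hc0 : (c : ℤ) ≠ 0 := Int.natCast_ne_zero.mpr (NeZero.ne c)
  have ha0 : (a : ℤ) ≠ 0 := Int.natCast_ne_zero.mpr (NeZero.ne a)
  set U : ℤ := (u.val : ℤ) with hU
  have hdvd : (c : ℤ) ∣ ((a : ℤ) * U - s) := by
    have h0 : ((((a : ℤ) * U - s : ℤ)) : ZMod c) = 0 := by
      rw [hU]
      push_cast
      rw [ZMod.natCast_val, ZMod.cast_id, hu]
      ring
    exact (ZMod.intCast_zmod_eq_zero_iff_dvd _ _).mp h0
  obtain ⟨k, hk⟩ := hdvd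
  have hdiv : (s - (a : ℤ) * U) / (c : ℤ) = -k := by
    have hs : s - (a : ℤ) * U = (c : ℤ) * (-k) := by linarith [hk]
    rw [hs, Int.mul_ediv_cancel_left _ hc0]
  have hfm : fmap s c a u = ((-k : ℤ) : ZMod a) := by
    rw [fmap, ← hU, hdiv]
  have part1 : (c : ZMod a) * fmap s c a u = (s : ZMod a) := by
    rw [hfm]
    have : (((c : ℤ) * (-k) : ℤ) : ZMod a) = ((s - (a : ℤ) * U : ℤ) : ZMod a) := by
      congr 1; linarith [hk]
    push_cast at this ⊢
    rw [this, ZMod.natCast_self]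
    ring
  refine ⟨part1, ?_⟩
  set V : ℤ := ((fmap s c a u).val : ℤ) with hV
  have hVa : ((V : ℤ) : ZMod a) = ((-k : ℤ) : ZMod a) := by
    rw [hV, ← hfm]
    push_cast
    rw [ZMod.natCast_val, ZMod.cast_id]
  have hdvd2 : (a : ℤ) ∣ (V + k) := by
    have h0 : (((V + k : ℤ)) : ZMod a) = 0 := by
      push_cast at hVa ⊢
      rw [hVa]; ring
    exact (ZMod.intCast_zmod_eq_zero_iff_dvd _ _).mp h0
  obtain ⟨e, he⟩ := hdvd2
  have hnum : s - (c : ℤ) * V = (a : ℤ) * (U - (c : ℤ) * e) := by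
    have hs : s = (a : ℤ) * U - (c : ℤ) * k := by linarith [hk]
    rw [hs]; nlinarith [he]
  have hdiv2 : (s - (c : ℤ) * V) / (a : ℤ) = U - (c : ℤ) * e := by
    rw [hnum, Int.mul_ediv_cancel_left _ ha0]
  show fmap s a c (fmap s c a u) = u
  rw [fmap, ← hV, hdiv2]
  have : ((U - (c : ℤ) * e : ℤ) : ZMod c) = ((U : ℤ) : ZMod c) := by
    push_cast
    ring_nf
    simp [ZMod.natCast_self]
  rw [this, hU]
  push_cast
  rw [ZMod.natCast_val, ZMod.cast_id]

lemma solCount_symm (c a : ℕ) (hc : 0 < c) (ha : 0 < a) (s : ℤ) :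
    solCount c a s = solCount a c s := by
  haveI : NeZero c := ⟨by omega⟩
  haveI : NeZero a := ⟨by omega⟩
  apply Nat.card_congr
  exact {
    toFun := fun u => ⟨fmap s c a u.1, (fmap_spec s u.1 u.2).1⟩
    invFun := fun v => ⟨fmap s a c v.1, (fmap_spec s v.1 v.2).1⟩
    left_inv := fun u => Subtype.ext (fmap_spec s u.1 u.2).2
    right_inv := fun v => Subtype.ext (fmap_spec s v.1 v.2).2 }


-- swap map for p<->q symmetry
def swapAB : L3 → L3 | A => B | B => A | C => C

lemma swapAB_inj : Function.Injective swapAB := by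
  intro x y h; cases x <;> cases y <;> simp [swapAB] at h ⊢

def revSwap (w : List L3) : List L3 := (w.reverse.map swapAB)

lemma revSwap_revSwap (w : List L3) : revSwap (revSwap w) = w := by
  simp [revSwap, ← List.map_reverse, List.map_map]
  have : swapAB ∘ swapAB = id := by funext x; cases x <;> rfl
  simp [this]

lemma count_revSwap (x : L3) (w : List L3) :
    (revSwap w).count (swapAB x) = w.count x := by
  rw [revSwap, List.count_map_of_injective _ _ swapAB_inj, List.count_reverse]

lemma cBar_revSwap (w : List L3) : cBar (revSwap w) = cAC w := by
  induction w with
  | nil => rfl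
  | cons x t ih =>
      rw [revSwap] at ih ⊢
      simp only [List.reverse_cons, List.map_append, List.countP_append, cBar, cAC,
        List.countP_cons, List.map_cons, List.map_nil]
      rw [show List.countP isBar (List.map swapAB t.reverse) = cAC t from ih]
      cases x <;> simp [swapAB, isBar, isAC]

lemma stat_revSwap (w : List L3) : stat (revSwap w) = stat w := by
  induction w with
  | nil => rfl
  | cons x t ih =>
      rw [revSwap, List.reverse_cons, List.map_append]
      rw [stat_append]
      simp only [List.map_cons, List.map_nil]
      rw [show ((List.map swapAB t.reverse) = revSwap t) from rfl, ih, cBar_revSwap]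
      have h1 : stat [swapAB x] = 0 := by cases x <;> simp [stat, swapAB, isBar]
      have h2 : cAC [swapAB x] = (if isBar x then 1 else 0) := by
        cases x <;> simp [swapAB, isAC, isBar]
      rw [h1, h2, stat_cons]
      cases hx : isBar x <;> simp [hx] <;> ring



lemma stat_rot_zmod (n₁ aa : ℕ) (u d : List L3)
    (hB : cBar u + cBar d = n₁) (hA : cAC u + cAC d = aa) :
    ((stat (d ++ u) : ZMod n₁))
      = (stat (u ++ d) : ZMod n₁) + (aa : ZMod n₁) * (cBar d : ZMod n₁) := by
  have h1 : stat (d ++ u) + cBar u * cAC d = stat (u ++ d) + cBar d * cAC u := by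
    rw [stat_append, stat_append]; ring
  have h1' := congrArg (Nat.cast : ℕ → ZMod n₁) h1
  have hB' := congrArg (Nat.cast : ℕ → ZMod n₁) hB
  have hA' := congrArg (Nat.cast : ℕ → ZMod n₁) hA
  push_cast at h1' hB' hA' ⊢
  rw [ZMod.natCast_self] at hB'
  linear_combination h1' - (cAC d : ZMod n₁) * hB' + (cBar d : ZMod n₁) * hA'

lemma posSum : ∀ (w : List L3) (Q : ℕ → Bool),
    (∑ k ∈ Finset.range w.length,
      if (isBar (w.getD k A) && Q (cBar (w.take (k+1)))) = true then 1 else 0)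
    = ∑ t ∈ Finset.range (cBar w), if Q (t+1) = true then 1 else 0 := by
  intro w
  induction w with
  | nil => simp
  | cons x t ih =>
      intro Q
      rw [show (x :: t).length = t.length + 1 from rfl, Finset.sum_range_succ']
      have hterm : ∀ k : ℕ,
          (if (isBar ((x :: t).getD (k+1) A) && Q (cBar ((x :: t).take (k+1+1)))) = true
            then 1 else 0)
          = (if (isBar (t.getD k A)
              && Q (cBar (t.take (k+1)) + (if isBar x then 1 else 0))) = true
            then (1:ℕ) else 0) := by
        intro k
        rw [List.getD_cons_succ, List.take_succ_cons]
        congr 2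
        rw [show cBar (x :: t.take (k+1)) = cBar (t.take (k+1)) + (if isBar x then 1 else 0)
          from List.countP_cons]
      simp only [hterm]
      have h0 : (if (isBar ((x :: t).getD 0 A) && Q (cBar ((x :: t).take (0+1)))) = true
          then (1:ℕ) else 0)
          = if (isBar x && Q (if isBar x = true then 1 else 0)) = true then 1 else 0 := by
        rw [List.getD_cons_zero, show List.take (0+1) (x :: t) = [x] by simp,
          show cBar [x] = (if isBar x = true then 1 else 0) by
            simp [cBar, List.countP_cons]]
      rw [h0]
      cases hx : isBar x
      · simp only [hx, Bool.false_and, Bool.false_eq_true, if_false, add_zero]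
        rw [ih Q]
        congr 1
        simp [cBar, List.countP_cons, hx]
      · simp only [hx, Bool.true_and, eq_self_iff_true, if_true]
        rw [show cBar (x :: t) = cBar t + 1 by simp [cBar, List.countP_cons, hx]]
        rw [Finset.sum_range_succ']
        rw [ih (fun z => Q (z + 1))]

lemma getD_take {α : Type*} (l : List α) (d : α) (n k : ℕ) (h : k < n) :
    (l.take n).getD k d = l.getD k d := by
  by_cases hk : k < l.length
  · have h1 : k < (l.take n).length := by simp [List.length_take]; omega
    rw [List.getD_eq_getElem _ _ h1, List.getD_eq_getElem _ _ hk]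
    simp [List.getElem_take]
  · rw [List.getD_eq_default (l.take n) d (by rw [List.length_take]; omega),
      List.getD_eq_default l d (by omega)]

lemma getD_drop {α : Type*} (l : List α) (d : α) (n k : ℕ) :
    (l.drop n).getD k d = l.getD (n + k) d := by
  by_cases hk : n + k < l.length
  · have h1 : k < (l.drop n).length := by simp [List.length_drop]; omega
    rw [List.getD_eq_getElem _ _ h1, List.getD_eq_getElem _ _ hk]
    simp [List.getElem_drop]
  · rw [List.getD_eq_default (l.drop n) d (by rw [List.length_drop]; omega),
      List.getD_eq_default l d (by omega)]

lemma endsBar_getD : ∀ (w : List L3), w ≠ [] → endsBar w = isBar (w.getD (w.length - 1) A)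
  | [], h => absurd rfl h
  | [x], _ => by simp
  | x :: y :: t, _ => by
      rw [endsBar_cons_cons, endsBar_getD (y :: t) (by simp)]
      simp [List.getD_cons_succ]

def Vset (p q m : ℕ) (i : ℤ) : Finset (List L3) :=
  (WordsF p q m).filter
    (fun w => endsBar w = true ∧ ((stat w : ZMod (q+m)) = (i : ZMod (q+m))))

def Sset (p q m : ℕ) (i : ℤ) : Finset (ℕ × List L3) :=
  ((Finset.range (p+q+m)) ×ˢ WordsF p q m).filter
    (fun kw => (isBar (kw.2.getD kw.1 A) &&
      decide ((stat kw.2 : ZMod (q+m))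
        = (i : ZMod (q+m))
          + ((p+m : ℕ) : ZMod (q+m)) * ((cBar (kw.2.take (kw.1+1)) : ℕ) : ZMod (q+m)))) = true)



lemma length_of_mem {p q m : ℕ} {w : List L3} (h : w ∈ WordsF p q m) :
    w.length = p + q + m := by
  rw [mem_WordsF] at h
  rw [len3, h.1, h.2.1, h.2.2]

lemma cBar_of_mem {p q m : ℕ} {w : List L3} (h : w ∈ WordsF p q m) :
    cBar w = q + m := by
  rw [mem_WordsF] at h
  rw [cBar_eq, h.2.1, h.2.2]

lemma cAC_of_mem {p q m : ℕ} {w : List L3} (h : w ∈ WordsF p q m) :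
    cAC w = p + m := by
  rw [mem_WordsF] at h
  rw [cAC_eq, h.1, h.2.2]

lemma rot_mem {p q m : ℕ} {w : List L3} (h : w ∈ WordsF p q m) (n : ℕ) :
    (w.drop n ++ w.take n) ∈ WordsF p q m := by
  rw [mem_WordsF] at h ⊢
  have hc : ∀ x : L3, (w.drop n ++ w.take n).count x = w.count x := by
    intro x
    rw [List.count_append, Nat.add_comm, ← List.count_append, List.take_append_drop]
  rw [hc, hc, hc]
  exact h

lemma card_Sset_left (p q m : ℕ) (i : ℤ) (hq : 1 ≤ q + m) :
    (Sset p q m i).card = (p + q + m) * (Vset p q m i).card := by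
  have hN : 1 ≤ p + q + m := by omega
  rw [show (p+q+m) * (Vset p q m i).card
      = ((Finset.range (p+q+m)) ×ˢ (Vset p q m i)).card by
    rw [Finset.card_product, Finset.card_range]]
  refine Finset.card_bij'
    (fun kw _ => (kw.1, kw.2.drop (kw.1+1) ++ kw.2.take (kw.1+1)))
    (fun kv _ => (kv.1, kv.2.drop (p+q+m-1-kv.1) ++ kv.2.take (p+q+m-1-kv.1)))
    ?hi ?hj ?left ?right
  case hi =>
    intro kw hkw
    obtain ⟨k, w⟩ := kw
    rw [Sset, Finset.mem_filter, Finset.mem_product, Finset.mem_range] at hkw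
    obtain ⟨⟨hk, hw⟩, hcond⟩ := hkw
    rw [Bool.and_eq_true, decide_eq_true_iff] at hcond
    obtain ⟨hbar, hcong⟩ := hcond
    dsimp only at hk hw hbar hcong ⊢
    have hlen := length_of_mem hw
    have hwne : w ≠ [] := by
      intro hc; rw [hc] at hlen; simp at hlen; omega
    have htne : w.take (k+1) ≠ [] := by
      intro hc
      have h0 := congrArg List.length hc
      rw [List.length_take] at h0
      simp only [List.length_nil] at h0
      omega
    rw [Finset.mem_product, Finset.mem_range]
    refine ⟨by omega, ?_⟩
    rw [Vset, Finset.mem_filter]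
    refine ⟨rot_mem hw _, ?_, ?_⟩
    · rw [endsBar_append _ _ htne, endsBar_getD _ htne]
      have hlt : (w.take (k+1)).length = k + 1 := by
        rw [List.length_take]; omega
      rw [hlt]
      simp only [Nat.add_sub_cancel]
      rw [getD_take w A (k+1) k (by omega)]
      exact hbar
    · have hB : cBar (w.take (k+1)) + cBar (w.drop (k+1)) = q + m := by
        rw [show cBar (w.take (k+1)) + cBar (w.drop (k+1))
            = cBar (w.take (k+1) ++ w.drop (k+1)) from List.countP_append.symm,
          List.take_append_drop]
        exact cBar_of_mem hw
      have hA : cAC (w.take (k+1)) + cAC (w.drop (k+1)) = p + m := by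
        rw [show cAC (w.take (k+1)) + cAC (w.drop (k+1))
            = cAC (w.take (k+1) ++ w.drop (k+1)) from List.countP_append.symm,
          List.take_append_drop]
        exact cAC_of_mem hw
      have key := stat_rot_zmod (q+m) (p+m) (w.take (k+1)) (w.drop (k+1)) hB hA
      rw [List.take_append_drop] at key
      rw [key, hcong]
      have hBc : ((cBar (w.take (k+1)) : ZMod (q+m)))
          + ((cBar (w.drop (k+1)) : ZMod (q+m))) = 0 := by
        have h0 := congrArg (Nat.cast : ℕ → ZMod (q+m)) hB
        rwa [Nat.cast_add, ZMod.natCast_self] at h0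
      push_cast
      linear_combination ((p : ZMod (q+m)) + (m : ZMod (q+m))) * hBc
  case hj =>
    intro kv hkv
    obtain ⟨k, v⟩ := kv
    rw [Finset.mem_product, Finset.mem_range] at hkv
    obtain ⟨hk, hv⟩ := hkv
    rw [Vset, Finset.mem_filter] at hv
    obtain ⟨hvW, hvE, hvC⟩ := hv
    dsimp only at hk hvW hvE hvC ⊢
    have hlen := length_of_mem hvW
    have hvne : v ≠ [] := by
      intro hc; rw [hc] at hlen; simp at hlen; omega
    have hdlen : (v.drop (p+q+m-1-k)).length = k + 1 := by
      rw [List.length_drop]; omega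
    rw [Sset, Finset.mem_filter, Finset.mem_product, Finset.mem_range]
    have htake : (v.drop (p+q+m-1-k) ++ v.take (p+q+m-1-k)).take (k+1)
        = v.drop (p+q+m-1-k) := by
      rw [← hdlen, List.take_left]
    refine ⟨⟨by omega, rot_mem hvW _⟩, ?_⟩
    rw [Bool.and_eq_true, decide_eq_true_iff]
    constructor
    · show isBar ((v.drop (p+q+m-1-k) ++ v.take (p+q+m-1-k)).getD k A) = true
      rw [List.getD_append _ _ _ _ (by rw [hdlen]; omega), getD_drop]
      rw [show (p+q+m-1-k) + k = v.length - 1 by omega]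
      rw [← endsBar_getD v hvne]
      exact hvE
    · have hB : cBar (v.take (p+q+m-1-k)) + cBar (v.drop (p+q+m-1-k)) = q + m := by
        rw [show cBar (v.take (p+q+m-1-k)) + cBar (v.drop (p+q+m-1-k))
            = cBar (v.take (p+q+m-1-k) ++ v.drop (p+q+m-1-k))
            from List.countP_append.symm,
          List.take_append_drop]
        exact cBar_of_mem hvW
      have hA : cAC (v.take (p+q+m-1-k)) + cAC (v.drop (p+q+m-1-k)) = p + m := by
        rw [show cAC (v.take (p+q+m-1-k)) + cAC (v.drop (p+q+m-1-k))
            = cAC (v.take (p+q+m-1-k) ++ v.drop (p+q+m-1-k))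
            from List.countP_append.symm,
          List.take_append_drop]
        exact cAC_of_mem hvW
      have key := stat_rot_zmod (q+m) (p+m) (v.take (p+q+m-1-k)) (v.drop (p+q+m-1-k)) hB hA
      rw [List.take_append_drop] at key
      rw [htake, key, hvC]
  case left =>
    intro kw hkw
    obtain ⟨k, w⟩ := kw
    rw [Sset, Finset.mem_filter, Finset.mem_product, Finset.mem_range] at hkw
    obtain ⟨⟨hk, hw⟩, _⟩ := hkw
    dsimp only at hk hw ⊢
    have hlen := length_of_mem hw
    have hdlen : (w.drop (k+1)).length = p + q + m - 1 - k := by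
      rw [List.length_drop]; omega
    rw [Prod.mk.injEq]
    refine ⟨rfl, ?_⟩
    rw [← hdlen, List.drop_left, List.take_left, List.take_append_drop]
  case right =>
    intro kv hkv
    obtain ⟨k, v⟩ := kv
    rw [Finset.mem_product, Finset.mem_range] at hkv
    obtain ⟨hk, hv⟩ := hkv
    rw [Vset, Finset.mem_filter] at hv
    dsimp only at hk hv ⊢
    have hlen := length_of_mem hv.1
    have hdlen : (v.drop (p+q+m-1-k)).length = k + 1 := by
      rw [List.length_drop]; omega
    rw [Prod.mk.injEq]
    refine ⟨rfl, ?_⟩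
    rw [← hdlen, List.drop_left, List.take_left, List.take_append_drop]


lemma sum_if_eq_solCount (c a : ℕ) (hc : 0 < c) (S : ℕ) (i : ℤ) :
    (∑ t ∈ Finset.range c, if (decide ((S : ZMod c) = (i : ZMod c)
        + (a : ZMod c) * ((t+1 : ℕ) : ZMod c))) = true then (1:ℕ) else 0)
      = solCount c a ((S : ℤ) - i) := by
  haveI : NeZero c := ⟨by omega⟩
  rw [solCount, Nat.card_eq_fintype_card, Fintype.card_subtype, Finset.card_filter]
  rw [← Fin.sum_univ_eq_sum_range]
  have hbij : Function.Bijective (fun t : Fin c => ((t.val + 1 : ℕ) : ZMod c)) := by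
    rw [Fintype.bijective_iff_injective_and_card]
    refine ⟨?_, by simp [ZMod.card]⟩
    intro t s h
    simp only at h
    have h2 : ((t.val : ℕ) : ZMod c) = ((s.val : ℕ) : ZMod c) := by
      push_cast at h ⊢
      linear_combination h
    have := congrArg ZMod.val h2
    rwa [ZMod.val_cast_of_lt t.isLt, ZMod.val_cast_of_lt s.isLt, ← Fin.ext_iff] at this
  rw [← Function.Bijective.sum_comp hbij
    (fun u => if (a : ZMod c) * u = (((S : ℤ) - i : ℤ) : ZMod c) then (1:ℕ) else 0)]
  refine Finset.sum_congr rfl ?_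
  intro t _
  congr 1
  rw [decide_eq_true_eq]
  have hcast : (((S : ℤ) - i : ℤ) : ZMod c) = (S : ZMod c) - (i : ZMod c) := by push_cast; ring
  rw [hcast, eq_iff_iff]
  constructor
  · intro h; linear_combination -h
  · intro h; linear_combination -h

lemma card_Sset_right (p q m : ℕ) (i : ℤ) (hq : 1 ≤ q + m) :
    (Sset p q m i).card = ∑ w ∈ WordsF p q m, solCount (q+m) (p+m) ((stat w : ℤ) - i) := by
  rw [Sset, Finset.card_filter, Finset.sum_product_right]
  refine Finset.sum_congr rfl ?_
  intro w hw
  have hlen := length_of_mem hw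
  have hcb := cBar_of_mem hw
  rw [show Finset.range (p+q+m) = Finset.range w.length by rw [hlen]]
  rw [posSum w (fun z => decide ((stat w : ZMod (q+m))
      = (i : ZMod (q+m)) + ((p+m : ℕ) : ZMod (q+m)) * ((z : ℕ) : ZMod (q+m))))]
  rw [hcb]
  exact sum_if_eq_solCount (q+m) (p+m) (by omega) (stat w) i

lemma N_mul_Vcard (p q m : ℕ) (i : ℤ) (hq : 1 ≤ q + m) :
    (p+q+m) * (Vset p q m i).card
      = ∑ w ∈ WordsF p q m, solCount (q+m) (p+m) ((stat w : ℤ) - i) := by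
  rw [← card_Sset_left p q m i hq, card_Sset_right p q m i hq]

lemma revSwap_mem {p q m : ℕ} {w : List L3} (h : w ∈ WordsF p q m) :
    revSwap w ∈ WordsF q p m := by
  rw [mem_WordsF] at h ⊢
  refine ⟨?_, ?_, ?_⟩
  · rw [show A = swapAB B from rfl, count_revSwap]; exact h.2.1
  · rw [show B = swapAB A from rfl, count_revSwap]; exact h.1
  · rw [show C = swapAB C from rfl, count_revSwap]; exact h.2.2

lemma sum_swap (p q m : ℕ) (f : ℕ → ℕ) :
    ∑ w ∈ WordsF p q m, f (stat w) = ∑ w ∈ WordsF q p m, f (stat w) := by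
  refine Finset.sum_bij' (i := fun w _ => revSwap w) (j := fun w _ => revSwap w)
    ?_ ?_ ?_ ?_ ?_
  · intro w hw; exact revSwap_mem hw
  · intro w hw; exact revSwap_mem hw
  · intro w hw; exact revSwap_revSwap w
  · intro w hw; exact revSwap_revSwap w
  · intro w hw; rw [stat_revSwap]



lemma enc_length (L : List (ℕ × Bool)) :
    (enc L).length = (L.map Prod.fst).sum + L.length := by
  induction L with
  | nil => rfl
  | cons x t ih =>
      obtain ⟨a, b⟩ := x
      simp [enc, ih]
      omega

lemma sum_fin_getD' {α : Type*} (g : α → ℕ) (d : α) (l : List α) (n : ℕ)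
    (h : l.length = n) :
    ∑ j : Fin n, g (l.getD j d) = (l.map g).sum := by
  subst h; exact sum_fin_getD g d l

lemma wt_eq_sum' (l : List (ℕ × Bool)) (n : ℕ) (h : l.length = n) :
    wt l = ∑ j : Fin n, (j : ℕ) * ((l.getD j (0, false)).1
      + cond (l.getD j (0, false)).2 1 0) := by
  subst h; exact wt_eq_sum l

lemma ofFn_getD' {α : Type*} (d : α) (l : List α) (n : ℕ) (h : l.length = n) :
    List.ofFn (fun j : Fin n => l.getD j d) = l := by
  subst h; exact ofFn_getD d l

def Lfun (n : ℕ) (x : (Fin n → ℕ) × Finset (Fin n)) : List (ℕ × Bool) :=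
  List.ofFn (fun j => (x.1 j, decide (j ∈ x.2)))

@[simp] lemma Lfun_length (n : ℕ) (x : (Fin n → ℕ) × Finset (Fin n)) :
    (Lfun n x).length = n := by simp [Lfun]

lemma getD_Lfun (n : ℕ) (x : (Fin n → ℕ) × Finset (Fin n)) (j : Fin n) :
    (Lfun n x).getD j (0, false) = (x.1 j, decide (j ∈ x.2)) := by
  rw [List.getD_eq_getElem _ _ (by simp)]
  simp [Lfun]

def toPair (n : ℕ) (w : List L3) : (Fin n → ℕ) × Finset (Fin n) :=
  (fun j => ((dec w).getD j (0, false)).1,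
    Finset.univ.filter (fun j => ((dec w).getD j (0, false)).2 = true))

lemma Lfun_toPair (n : ℕ) (w : List L3) (h : (dec w).length = n) :
    Lfun n (toPair n w) = dec w := by
  rw [← ofFn_getD' (0, false) (dec w) n h, Lfun]
  congr 1
  funext j
  simp only [toPair, Finset.mem_filter, Finset.mem_univ, true_and]
  exact Prod.ext rfl (by simp)

-- weight translation
lemma weight_eq_wt (n : ℕ) (x : (Fin n → ℕ) × Finset (Fin n)) :
    (∑ j : Fin n, (j : ℤ) * (x.1 j : ℤ)) + ∑ j ∈ x.2, (j : ℤ)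
      = ((wt (Lfun n x) : ℕ) : ℤ) := by
  rw [wt_eq_sum' (Lfun n x) n (by simp)]
  push_cast
  rw [show (∑ j ∈ x.2, (j : ℤ))
      = ∑ j : Fin n, (if j ∈ x.2 then (j : ℤ) else 0) by
    rw [Finset.sum_ite_mem, Finset.univ_inter]]
  rw [← Finset.sum_add_distrib]
  refine Finset.sum_congr rfl ?_
  intro j _
  rw [getD_Lfun]
  by_cases hj : j ∈ x.2 <;> simp [hj] <;> ring

lemma count_A_toW (n : ℕ) (x : (Fin n → ℕ) × Finset (Fin n)) :
    (enc (Lfun n x)).count A = ∑ j, x.1 j := by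
  rw [count_A_enc, Lfun, List.map_ofFn]
  rw [List.sum_ofFn]
  rfl

lemma count_C_toW (n : ℕ) (x : (Fin n → ℕ) × Finset (Fin n)) :
    (enc (Lfun n x)).count C = x.2.card := by
  rw [count_C_enc, cTrue_eq]
  rw [Lfun, List.map_ofFn, List.sum_ofFn]
  rw [show x.2.card = ∑ j : Fin n, (if j ∈ x.2 then 1 else 0) by
    rw [Finset.sum_ite_mem, Finset.univ_inter, Finset.sum_const, smul_eq_mul, mul_one]]
  refine Finset.sum_congr rfl ?_
  intro j _
  by_cases hj : j ∈ x.2 <;> simp [hj]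



lemma card_side (p q m : ℕ) (i : ℤ) (hq : 1 ≤ q + m) :
    Nat.card {lJ : (Fin (q + m) → ℕ) × Finset (Fin (q + m)) //
      (∑ j, lJ.1 j) = p ∧ lJ.2.card = m ∧
      ((∑ j : Fin (q + m), (j : ℤ) * (lJ.1 j : ℤ)) + ∑ j ∈ lJ.2, (j : ℤ))
        ≡ i [ZMOD ((q + m : ℕ) : ℤ)]} = (Vset p q m i).card := by
  rw [← Nat.card_eq_finsetCard]
  apply Nat.card_congr
  refine {
    toFun := fun x => ⟨enc (Lfun (q+m) x.1), ?_⟩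
    invFun := fun w => ⟨toPair (q+m) w.1, ?_⟩
    left_inv := ?_
    right_inv := ?_ }
  · -- forward membership
    obtain ⟨x, hsum, hcard, hcong⟩ := x
    have hne : Lfun (q+m) x ≠ [] := by
      intro hc
      have := congrArg List.length hc
      rw [Lfun_length] at this
      simp at this
      omega
    have hA : (enc (Lfun (q+m) x)).count A = p := by rw [count_A_toW, hsum]
    have hC : (enc (Lfun (q+m) x)).count C = m := by rw [count_C_toW, hcard]
    have hlen : (enc (Lfun (q+m) x)).length = p + (q + m) := by
      rw [enc_length]
      congr 1
      · rw [Lfun, List.map_ofFn, List.sum_ofFn, ← hsum]; rfl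
      · simp
    have hB : (enc (Lfun (q+m) x)).count B = q := by
      have := len3 (enc (Lfun (q+m) x))
      rw [hlen, hA, hC] at this
      omega
    rw [Vset, Finset.mem_filter, mem_WordsF]
    refine ⟨⟨hA, hB, hC⟩, endsBar_enc hne, ?_⟩
    have hwt := weight_eq_wt (q+m) x
    rw [← ZMod.intCast_eq_intCast_iff, hwt] at hcong
    rw [stat_enc]
    rw [show ((wt (Lfun (q+m) x) : ℕ) : ZMod (q+m))
        = (((wt (Lfun (q+m) x) : ℕ) : ℤ) : ZMod (q+m)) by push_cast; rfl]
    exact hcong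
  · -- backward membership
    obtain ⟨w, hw⟩ := w
    rw [Vset, Finset.mem_filter] at hw
    obtain ⟨hwW, hwE, hwC⟩ := hw
    have hlen : (dec w).length = q + m := by rw [length_dec, cBar_of_mem hwW]
    have hencdec : enc (dec w) = w := enc_dec hwE
    have hLT := Lfun_toPair (q+m) w hlen
    rw [mem_WordsF] at hwW
    refine ⟨?_, ?_, ?_⟩
    · -- sum
      show ∑ j, (toPair (q+m) w).1 j = p
      rw [show ∑ j, (toPair (q+m) w).1 j
          = (List.map Prod.fst (dec w)).sum from
        sum_fin_getD' Prod.fst (0, false) (dec w) (q+m) hlen]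
      rw [← count_A_enc, hencdec]
      exact hwW.1
    · -- card
      show (Finset.univ.filter (fun j : Fin (q+m) => ((dec w).getD j (0, false)).2 = true)).card = m
      rw [Finset.card_filter]
      rw [show (∑ j : Fin (q+m), if ((dec w).getD j (0, false)).2 = true then 1 else 0)
          = (List.map (fun y => (cond y.2 1 0 : ℕ)) (dec w)).sum by
        rw [← sum_fin_getD' (fun y => (cond y.2 1 0 : ℕ)) (0, false) (dec w) (q+m) hlen]
        refine Finset.sum_congr rfl ?_
        intro j _
        cases hb : ((dec w).getD j (0, false)).2 <;> simp [hb]]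
      rw [← cTrue_eq, ← count_C_enc, hencdec]
      exact hwW.2.2
    · -- congruence
      rw [← ZMod.intCast_eq_intCast_iff]
      rw [weight_eq_wt (q+m) (toPair (q+m) w), hLT]
      rw [show wt (dec w) = stat w by rw [← stat_enc, hencdec]]
      rw [show (((stat w : ℕ) : ℤ) : ZMod (q+m)) = ((stat w : ℕ) : ZMod (q+m)) by
        push_cast; rfl]
      exact hwC
  · -- left_inv
    intro x
    obtain ⟨x, hx⟩ := x
    apply Subtype.ext
    show toPair (q+m) (enc (Lfun (q+m) x)) = x
    have hdec : dec (enc (Lfun (q+m) x)) = Lfun (q+m) x := dec_enc _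
    obtain ⟨f, J⟩ := x
    rw [toPair, hdec]
    refine Prod.ext ?_ ?_
    · funext j
      show ((Lfun (q+m) (f, J)).getD j (0, false)).1 = f j
      rw [getD_Lfun]
    · show Finset.univ.filter _ = J
      ext j
      rw [Finset.mem_filter]
      simp only [Finset.mem_univ, true_and]
      rw [getD_Lfun]
      simp
  · -- right_inv
    intro w
    obtain ⟨w, hw⟩ := w
    apply Subtype.ext
    show enc (Lfun (q+m) (toPair (q+m) w)) = w
    rw [Vset, Finset.mem_filter] at hw
    have hlen : (dec w).length = q + m := by rw [length_dec, cBar_of_mem hw.1]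
    rw [Lfun_toPair (q+m) w hlen]
    exact enc_dec hw.2.1


end GFR

/-- Generalised (Fredman) reciprocity: for nonnegative integers `p, q, m` with `q+m ≥ 1` and
`p+m ≥ 1` and any integer `i`, `T_i(q+m, p, m) = T_i(p+m, q, m)`, where `T_i(n,p,m)` counts
pairs `(λ, J)` with `λ` a tuple of `n` nonnegative integers summing to `p`, `J` an `m`-element
subset of `{0,…,n-1}`, and `Σ j·λ_j + Σ_{j∈J} j ≡ i (mod n)`. -/
theorem generalized_fredman_reciprocity (p q m : ℕ) (h1 : 1 ≤ q + m) (h2 : 1 ≤ p + m) (i : ℤ) :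
    Nat.card {lJ : (Fin (q + m) → ℕ) × Finset (Fin (q + m)) //
      (∑ j, lJ.1 j) = p ∧ lJ.2.card = m ∧
      ((∑ j : Fin (q + m), (j : ℤ) * (lJ.1 j : ℤ)) + ∑ j ∈ lJ.2, (j : ℤ))
        ≡ i [ZMOD ((q + m : ℕ) : ℤ)]} =
    Nat.card {lJ : (Fin (p + m) → ℕ) × Finset (Fin (p + m)) //
      (∑ j, lJ.1 j) = q ∧ lJ.2.card = m ∧
      ((∑ j : Fin (p + m), (j : ℤ) * (lJ.1 j : ℤ)) + ∑ j ∈ lJ.2, (j : ℤ))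
        ≡ i [ZMOD ((p + m : ℕ) : ℤ)]} := by
  have e1 := GFR.card_side p q m i h1
  have e2 := GFR.card_side q p m i h2
  rw [e1, e2]
  have m1 := GFR.N_mul_Vcard p q m i h1
  have m2 := GFR.N_mul_Vcard q p m i h2
  have d1 : (∑ w ∈ GFR.WordsF p q m, GFR.solCount (q+m) (p+m) ((GFR.stat w : ℤ) - i))
      = ∑ w ∈ GFR.WordsF p q m, GFR.solCount (p+m) (q+m) ((GFR.stat w : ℤ) - i) := by
    refine Finset.sum_congr rfl ?_
    intro w _
    exact GFR.solCount_symm (q+m) (p+m) (by omega) (by omega) _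
  have sw := GFR.sum_swap p q m (fun S => GFR.solCount (p+m) (q+m) ((S : ℤ) - i))
  have key : (p+q+m) * (GFR.Vset p q m i).card = (q+p+m) * (GFR.Vset q p m i).card := by
    rw [m1, m2, d1]
    exact sw
  have hNc : p + q + m = q + p + m := by omega
  rw [hNc] at key
  exact Nat.eq_of_mul_eq_mul_left (by omega) key
end

section
/- For every real number z with |z| < 1, the infinite product ∏_{d=1}^∞ (1 + z^d)^{φ(d)/d} converges (in the sense that the partial products converge, i.e., the family of factors has the product) and equals exp(z/(1 − z²)), where φ is Euler's totient function and the factors are real powers of the positive real numbers 1 + z^d. -/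
open Real

lemma key_hasSum (w : ℝ) (hw : |w| < 1) :
    HasSum (fun d : {d : ℕ // 1 ≤ d} =>
      (Nat.totient d.val : ℝ) / (d.val : ℝ) * (-Real.log (1 - w ^ d.val)))
      (w / (1 - w)) := by
  set F : {d : ℕ // 1 ≤ d} × ℕ → ℝ := fun p =>
    (Nat.totient p.1.1 : ℝ) * w ^ (p.1.1 * (p.2 + 1)) / (p.1.1 * (p.2 + 1)) with hF_def
  have habs : ∀ d : {d : ℕ // 1 ≤ d}, |w ^ d.1| < 1 := by
    intro d
    rw [abs_pow]
    calc |w| ^ d.1 ≤ |w| ^ 1 := pow_le_pow_of_le_one (abs_nonneg w) hw.le d.2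
    _ = |w| := pow_one _
    _ < 1 := hw
  -- row sums
  have hrow : ∀ d : {d : ℕ // 1 ≤ d}, HasSum (fun n => F (d, n))
      ((Nat.totient d.val : ℝ) / (d.val : ℝ) * (-Real.log (1 - w ^ d.val))) := by
    intro d
    have h0 := (hasSum_pow_div_log_of_abs_lt_one (habs d)).mul_left
      ((Nat.totient d.val : ℝ) / (d.val : ℝ))
    refine h0.congr_fun fun n => ?_
    have hd0 : ((d.1 : ℝ)) ≠ 0 := by
      have : (0:ℝ) < (d.1 : ℝ) := by exact_mod_cast d.2
      exact this.ne'
    rw [hF_def]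
    simp only []
    rw [div_mul_div_comm, ← pow_mul]
  -- summability
  have hG : Summable fun p : {d : ℕ // 1 ≤ d} × ℕ => (|w| ^ p.1.1) ^ (p.2 + 1) := by
    rw [summable_prod_of_nonneg (fun p => by positivity)]
    refine ⟨fun d => ?_, ?_⟩
    · simp only [pow_succ]
      exact (summable_geometric_of_lt_one (by positivity)
        (lt_of_abs_lt (by simpa [abs_pow] using habs d))).mul_right _
    · refine Summable.of_nonneg_of_le (fun d => tsum_nonneg fun n => by positivity)
        (fun d => ?_) (((summable_geometric_of_lt_one (abs_nonneg w) hw).mul_right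
          (1 - |w|)⁻¹).subtype _)
      set r : ℝ := |w| ^ d.1 with hr
      have hr0 : 0 ≤ r := by positivity
      have hr1 : r < 1 := by simpa [hr, abs_pow] using habs d
      have htsum : ∑' n : ℕ, (|w| ^ (d, n).1.1) ^ ((d, n).2 + 1) = r * (1 - r)⁻¹ := by
        simp only [← hr, pow_succ']
        rw [tsum_mul_left, tsum_geometric_of_lt_one hr0 hr1]
      rw [htsum]
      have hrle : r ≤ |w| := by
        calc r = |w| ^ d.1 := hr
        _ ≤ |w| ^ 1 := pow_le_pow_of_le_one (abs_nonneg w) hw.le d.2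
        _ = |w| := pow_one _
      show r * (1 - r)⁻¹ ≤ |w| ^ d.1 * (1 - |w|)⁻¹
      rw [← hr]
      have hinv : (1 - r)⁻¹ ≤ (1 - |w|)⁻¹ := by
        apply inv_anti₀ <;> linarith
      exact mul_le_mul_of_nonneg_left hinv hr0
  have hFsummable : Summable F := by
    refine Summable.of_abs (Summable.of_nonneg_of_le (fun p => abs_nonneg _) (fun p => ?_) hG)
    obtain ⟨d, n⟩ := p
    have hden : (0:ℝ) < (d.1:ℝ) * ((n:ℝ) + 1) := by
      have : (0:ℝ) < (d.1:ℝ) := by exact_mod_cast d.2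
      positivity
    have hφ : (Nat.totient d.1 : ℝ) ≤ (d.1:ℝ) * ((n:ℝ) + 1) := by
      have h1 : (Nat.totient d.1 : ℕ) ≤ d.1 * (n + 1) :=
        le_trans (Nat.totient_le d.1) (Nat.le_mul_of_pos_right _ n.succ_pos)
      exact_mod_cast h1
    have habsF : |F (d, n)| =
        (Nat.totient d.1 : ℝ) * |w| ^ (d.1 * (n + 1)) / ((d.1:ℝ) * ((n:ℝ) + 1)) := by
      rw [hF_def]
      simp only []
      rw [abs_div, abs_of_pos hden, abs_mul, abs_pow, Nat.abs_cast]
    rw [habsF, div_le_iff₀ hden, ← pow_mul]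
    calc (Nat.totient d.1 : ℝ) * |w| ^ (d.1 * (n + 1))
        ≤ ((d.1:ℝ) * ((n:ℝ) + 1)) * |w| ^ (d.1 * (n + 1)) :=
          mul_le_mul_of_nonneg_right hφ (by positivity)
      _ = |w| ^ (d.1 * (n + 1)) * ((d.1:ℝ) * ((n:ℝ) + 1)) := mul_comm _ _
  -- the total sum
  set S : ℝ := ∑' p, F p with hS
  have hFS : HasSum F S := hFsummable.hasSum
  -- extend to ℕ × ℕ via the injection (d, n) ↦ (d, d * (n + 1))
  set G : ℕ × ℕ → ℝ := fun q =>
    if q.1 ∈ Nat.divisors q.2 then (Nat.totient q.1 : ℝ) * w ^ q.2 / q.2 else 0 with hG_def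
  set e : {d : ℕ // 1 ≤ d} × ℕ → ℕ × ℕ := fun p => (p.1.1, p.1.1 * (p.2 + 1)) with he_def
  have he_inj : Function.Injective e := by
    rintro ⟨⟨d, hd⟩, n⟩ ⟨⟨d', hd'⟩, n'⟩ hEq
    simp only [he_def, Prod.mk.injEq] at hEq
    obtain ⟨h1, h2⟩ := hEq
    subst h1
    have hn : n = n' := by
      have := Nat.eq_of_mul_eq_mul_left (show 0 < d from hd) h2
      omega
    simp [hn]
  have hcomp : ∀ p, G (e p) = F p := by
    rintro ⟨⟨d, hd⟩, n⟩
    have hd0 : d ≠ 0 := Nat.one_le_iff_ne_zero.1 hd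
    have hmem : d ∈ Nat.divisors (d * (n + 1)) :=
      Nat.mem_divisors.2 ⟨Dvd.intro _ rfl, Nat.mul_ne_zero hd0 n.succ_ne_zero⟩
    simp only [he_def, hG_def, hF_def, if_pos hmem]
    push_cast
    ring
  have hzero : ∀ q ∉ Set.range e, G q = 0 := by
    rintro ⟨d, m⟩ hq
    by_contra hne
    apply hq
    have hmem : d ∈ Nat.divisors m := by
      by_contra hmem
      refine hne ?_
      simp only [hG_def]
      rw [if_neg hmem]
    obtain ⟨hdvd, hm⟩ := Nat.mem_divisors.1 hmem
    have hd0 : 0 < d := Nat.pos_of_mem_divisors hmem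
    have h1 : 1 ≤ m / d := (Nat.one_le_div_iff hd0).2
      (Nat.le_of_dvd (Nat.pos_of_ne_zero hm) hdvd)
    refine ⟨(⟨d, hd0⟩, m / d - 1), ?_⟩
    simp only [he_def]
    have hkey : d * (m / d - 1 + 1) = m := by
      rw [Nat.sub_add_cancel h1, Nat.mul_div_cancel' hdvd]
    simp [hkey]
  have hGS : HasSum G S := by
    rw [← he_inj.hasSum_iff hzero]
    exact hFS.congr_fun fun p => hcomp p
  -- regroup over the second coordinate
  have hGswap : HasSum (fun q : ℕ × ℕ => G (q.2, q.1)) S := by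
    have := (Equiv.prodComm ℕ ℕ).hasSum_iff.2 hGS
    exact this.congr_fun fun q => rfl
  set g : ℕ → ℝ := fun m => if m = 0 then 0 else w ^ m with hg_def
  have hfib : ∀ m : ℕ, HasSum (fun d : ℕ => G (d, m)) (g m) := by
    intro m
    have h0 : ∀ d ∉ Nat.divisors m, G (d, m) = 0 := by
      intro d hd
      simp only [hG_def]
      rw [if_neg hd]
    have hft := hasSum_sum_of_ne_finset_zero (L := SummationFilter.unconditional ℕ) h0
    have hval : (∑ d ∈ Nat.divisors m, G (d, m)) = g m := by
      rcases eq_or_ne m 0 with rfl | hm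
      · simp [hg_def, Nat.divisors_zero]
      · have hterm : ∀ d ∈ Nat.divisors m,
            G (d, m) = (Nat.totient d : ℝ) * w ^ m / m := by
          intro d hd
          simp only [hG_def]
          rw [if_pos hd]
        rw [Finset.sum_congr rfl hterm]
        simp only [hg_def, if_neg hm]
        rw [← Finset.sum_div, ← Finset.sum_mul]
        have hst : (∑ d ∈ Nat.divisors m, (Nat.totient d : ℝ)) = m := by
          exact_mod_cast congrArg (Nat.cast : ℕ → ℝ) (Nat.sum_totient m)
        rw [hst]
        have hm' : (m:ℝ) ≠ 0 := by exact_mod_cast hm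
        field_simp
    rw [← hval]
    exact hft
  have hgS : HasSum g S := hGswap.prod_fiberwise hfib
  -- g has sum w / (1 - w)
  have hgval : HasSum g (w / (1 - w)) := by
    have h1 := hasSum_geometric_of_abs_lt_one hw
    have h2 : HasSum (fun m : ℕ => if m = 0 then (1:ℝ) else 0) 1 := hasSum_ite_eq 0 1
    have h3 := h1.sub h2
    have hw1 : (1:ℝ) - w ≠ 0 := by
      have := lt_of_abs_lt hw
      intro hc; nlinarith
    have hval : (1 - w)⁻¹ - 1 = w / (1 - w) := by field_simp; ring
    rw [hval] at h3
    refine h3.congr_fun fun m => ?_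
    rcases eq_or_ne m 0 with rfl | hm
    · simp [hg_def]
    · simp [hg_def, hm]
  have hSval : S = w / (1 - w) := hgS.unique hgval
  rw [← hSval]
  exact hFS.prod_fiberwise hrow

/-- For `|z| < 1`, the infinite product `∏_{d ≥ 1} (1 + z^d)^{φ(d)/d}` (real powers of the
positive reals `1 + z^d`) has value `exp(z/(1 − z²))`. -/
theorem prod_one_add_pow_totient (z : ℝ) (h : |z| < 1) :
    HasProd (fun d : {d : ℕ // 1 ≤ d} =>
        (1 + z ^ d.val) ^ ((Nat.totient d.val : ℝ) / (d.val : ℝ)))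
      (Real.exp (z / (1 - z ^ 2))) := by
  have hz2 : |z ^ 2| < 1 := by
    rw [abs_pow]
    calc |z| ^ 2 ≤ |z| * 1 := by nlinarith [abs_nonneg z]
    _ < 1 := by simpa using h
  have h1 := key_hasSum z h
  have h2 := key_hasSum (z ^ 2) hz2
  have hsum := h1.sub h2
  have hzlt := lt_of_abs_lt h
  have hzgt := neg_lt_of_abs_lt h
  have hval : z / (1 - z) - z ^ 2 / (1 - z ^ 2) = z / (1 - z ^ 2) := by
    have ha : (1:ℝ) - z ≠ 0 := by intro hc; nlinarith
    have hb : (1:ℝ) + z ≠ 0 := by intro hc; nlinarith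
    have hc3 : (1:ℝ) - z ^ 2 ≠ 0 := by
      intro hc
      have hmul : (1 - z) * (1 + z) = 0 := by nlinarith
      rcases mul_eq_zero.1 hmul with hc' | hc' <;> [exact ha hc'; exact hb hc']
    field_simp
    ring
  rw [hval] at hsum
  have habs : ∀ d : {d : ℕ // 1 ≤ d}, |z ^ d.1| < 1 := by
    intro d
    rw [abs_pow]
    calc |z| ^ d.1 ≤ |z| ^ 1 := pow_le_pow_of_le_one (abs_nonneg z) h.le d.2
    _ = |z| := pow_one _
    _ < 1 := h
  have hterm : ∀ d : {d : ℕ // 1 ≤ d},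
      (Nat.totient d.val : ℝ) / (d.val : ℝ) * Real.log (1 + z ^ d.val) =
      (Nat.totient d.val : ℝ) / (d.val : ℝ) * (-Real.log (1 - z ^ d.val)) -
      (Nat.totient d.val : ℝ) / (d.val : ℝ) * (-Real.log (1 - (z ^ 2) ^ d.val)) := by
    intro d
    have ha := habs d
    have hlt := lt_of_abs_lt ha
    have hgt := neg_lt_of_abs_lt ha
    have hp1 : (0:ℝ) < 1 - z ^ d.1 := by linarith
    have hp2 : (0:ℝ) < 1 + z ^ d.1 := by linarith
    have hfact : 1 - (z ^ 2) ^ d.1 = (1 - z ^ d.1) * (1 + z ^ d.1) := by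
      rw [← pow_mul, two_mul, pow_add]; ring
    rw [← mul_sub]
    congr 1
    rw [hfact, Real.log_mul hp1.ne' hp2.ne']
    ring
  have hsum2 : HasSum (fun d : {d : ℕ // 1 ≤ d} =>
      (Nat.totient d.val : ℝ) / (d.val : ℝ) * Real.log (1 + z ^ d.val))
      (z / (1 - z ^ 2)) := hsum.congr_fun hterm
  have hprod := hsum2.rexp
  refine hprod.congr_fun fun d => ?_
  have hp2 : (0:ℝ) < 1 + z ^ d.1 := by
    have := neg_lt_of_abs_lt (habs d); linarith
  rw [Function.comp_apply, Real.rpow_def_of_pos hp2]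
  ring_nf
end

section
/- For every real number y with |y| < 1, the infinite product ∏_{d=1}^∞ (1 − y^d)^{φ(d)/d} converges (in the sense that the partial products converge, i.e., the family of factors has the product) and equals exp(−y/(1 − y)), where φ is Euler's totient function and the factors are real powers of the positive real numbers 1 − y^d. -/
open Real Finset Function

private lemma aux_pow_lt_one {y : ℝ} (h : |y| < 1) {d : ℕ} (hd : 1 ≤ d) : |y ^ d| < 1 := by
  rw [abs_pow]
  calc |y| ^ d ≤ |y| ^ 1 := pow_le_pow_of_le_one (abs_nonneg y) h.le hd
  _ = |y| := pow_one _
  _ < 1 := h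

private lemma aux_pos {y : ℝ} (h : |y| < 1) {d : ℕ} (hd : 1 ≤ d) : 0 < 1 - y ^ d := by
  have h1 : y ^ d ≤ |y ^ d| := le_abs_self _
  have := aux_pow_lt_one h hd
  linarith

set_option maxHeartbeats 1000000 in
/-- The key sum identity: `∑_{d ≥ 0} (φ(d)/d)·(−log(1−y^d)) = y/(1−y)`
(the `d = 0` term vanishes since `φ(0) = 0`). -/
private lemma aux_hasSum {y : ℝ} (h : |y| < 1) :
    HasSum (fun d : ℕ => ((Nat.totient d : ℝ) / d) * (-Real.log (1 - y ^ d)))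
      (y / (1 - y)) := by
  set F : ℕ × ℕ → ℝ := fun p => ((Nat.totient p.1 : ℝ) / p.1) * y ^ (p.1 * p.2) / p.2 with hF
  -- F vanishes when either coordinate is zero
  have hF1 : ∀ k : ℕ, F (0, k) = 0 := by intro k; simp [hF]
  have hF2 : ∀ d : ℕ, F (d, 0) = 0 := by intro d; simp [hF]
  -- Summability of F
  set r : ℝ := Real.sqrt |y| with hr
  have hr0 : 0 ≤ r := Real.sqrt_nonneg _
  have hr2 : r ^ 2 = |y| := Real.sq_sqrt (abs_nonneg y)
  have hr1 : r < 1 := by nlinarith [h]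
  have hsum_r : Summable (fun n : ℕ => r ^ n) := summable_geometric_of_lt_one hr0 hr1
  have hsummable : Summable F := by
    apply Summable.of_norm_bounded (g := fun p : ℕ × ℕ => r ^ p.1 * r ^ p.2)
      (hsum_r.mul_of_nonneg hsum_r (fun n => pow_nonneg hr0 n) (fun n => pow_nonneg hr0 n))
    rintro ⟨d, k⟩
    rcases Nat.eq_zero_or_pos d with hd | hd
    · subst hd; simp [hF1]; positivity
    rcases Nat.eq_zero_or_pos k with hk | hk
    · subst hk; simp [hF2]; positivity
    have h1 : ‖F (d, k)‖ ≤ |y| ^ (d * k) := by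
      have hφ : (Nat.totient d : ℝ) / d ≤ 1 := by
        rw [div_le_one (by exact_mod_cast hd)]
        exact_mod_cast Nat.totient_le d
      have hφ0 : (0:ℝ) ≤ (Nat.totient d : ℝ) / d := by positivity
      have hk1 : (1:ℝ) ≤ (k : ℝ) := by exact_mod_cast hk
      rw [Real.norm_eq_abs, hF]
      simp only [abs_div, abs_mul, abs_pow, Nat.abs_cast, abs_abs]
      calc (Nat.totient d : ℝ) / d * |y| ^ (d * k) / k
          ≤ 1 * |y| ^ (d * k) / 1 := by
            apply div_le_div₀ (by positivity) _ one_pos hk1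
            exact mul_le_mul_of_nonneg_right hφ (by positivity)
        _ = |y| ^ (d * k) := by ring
    have h2 : |y| ^ (d * k) ≤ r ^ d * r ^ k := by
      have heq2 : |y| ^ (d * k) = r ^ (2 * (d * k)) := by
        rw [← hr2, ← pow_mul]
      rw [heq2, ← pow_add]
      apply pow_le_pow_of_le_one hr0 hr1.le
      nlinarith [hd, hk]
    exact h1.trans h2
  obtain ⟨S, hS⟩ := hsummable
  -- fiberwise sums over d
  have hfiber_d : ∀ d : ℕ, HasSum (fun k => F (d, k))
      (((Nat.totient d : ℝ) / d) * (-Real.log (1 - y ^ d))) := by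
    intro d
    rcases Nat.eq_zero_or_pos d with hd | hd
    · subst hd
      simp only [hF1]
      simpa using hasSum_zero
    · have hlog := hasSum_pow_div_log_of_abs_lt_one (aux_pow_lt_one h hd)
      have := hlog.mul_left ((Nat.totient d : ℝ) / d)
      have heq : ∀ n : ℕ, ((Nat.totient d : ℝ) / d) * ((y ^ d) ^ (n + 1) / (n + 1))
          = F (d, n + 1) := by
        intro n
        rw [hF]
        push_cast
        rw [← pow_mul]
        ring
      rw [show (fun n : ℕ => ((Nat.totient d : ℝ) / d) * ((y ^ d) ^ (n + 1) / (n + 1)))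
          = fun n => F (d, n + 1) from funext heq] at this
      have := (hasSum_nat_add_iff (f := fun k => F (d, k)) 1).mp this
      simpa [hF2] using this
  have hd_sum : HasSum (fun d : ℕ => ((Nat.totient d : ℝ) / d) * (-Real.log (1 - y ^ d))) S :=
    hS.prod_fiberwise hfiber_d
  -- fiberwise sums over n = d * k
  set m : ℕ × ℕ → ℕ := fun p => p.1 * p.2 with hm
  have hSe : HasSum (F ∘ (Equiv.sigmaFiberEquiv m)) S :=
    (Equiv.sigmaFiberEquiv m).hasSum_iff.mpr hS
  set g : ℕ → ℝ := fun n => if n = 0 then 0 else y ^ n with hg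
  have hfiber_n : ∀ n : ℕ, HasSum (fun c : {p : ℕ × ℕ // m p = n} =>
      (F ∘ (Equiv.sigmaFiberEquiv m)) ⟨n, c⟩) (g n) := by
    intro n
    rcases Nat.eq_zero_or_pos n with hn | hn
    · subst hn
      have : ∀ c : {p : ℕ × ℕ // m p = 0}, (F ∘ (Equiv.sigmaFiberEquiv m)) ⟨0, c⟩ = 0 := by
        rintro ⟨⟨d, k⟩, hc⟩
        simp only [hm] at hc
        rcases Nat.mul_eq_zero.mp hc with h0 | h0
        · subst h0; exact hF1 k
        · subst h0; exact hF2 d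
      rw [show (fun c : {p : ℕ × ℕ // m p = 0} => (F ∘ (Equiv.sigmaFiberEquiv m)) ⟨0, c⟩)
          = fun _ => 0 from funext this]
      simpa [hg] using hasSum_zero
    · -- fiber is the divisorsAntidiagonal
      have hmem : ∀ p : ℕ × ℕ, m p = n ↔ p ∈ Nat.divisorsAntidiagonal n := by
        intro p
        rw [Nat.mem_divisorsAntidiagonal]
        exact ⟨fun hp => ⟨hp, hn.ne'⟩, fun hp => hp.1⟩
      have hfs : HasSum (F ∘ ((↑) : Nat.divisorsAntidiagonal n → ℕ × ℕ))
          (∑ p ∈ Nat.divisorsAntidiagonal n, F p) := (Nat.divisorsAntidiagonal n).hasSum F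
      have := (Equiv.subtypeEquivRight hmem).hasSum_iff.mpr hfs
      have hval : ∑ p ∈ Nat.divisorsAntidiagonal n, F p = g n := by
        rw [show ∑ p ∈ Nat.divisorsAntidiagonal n, F p
            = ∑ p ∈ Nat.divisorsAntidiagonal n,
              (fun a b => ((Nat.totient a : ℝ) / a) * y ^ (a * b) / b) p.1 p.2 from rfl]
        rw [Nat.sum_divisorsAntidiagonal (fun a b => ((Nat.totient a : ℝ) / a) * y ^ (a * b) / b)]
        have hterm : ∀ d ∈ n.divisors,
            ((Nat.totient d : ℝ) / d) * y ^ (d * (n / d)) / (n / d : ℕ)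
              = (Nat.totient d : ℝ) * (y ^ n / n) := by
          intro d hd
          obtain ⟨hdvd, hn0⟩ := Nat.mem_divisors.mp hd
          have hd0 : d ≠ 0 := (Nat.pos_of_mem_divisors hd).ne'
          have hmul : d * (n / d) = n := Nat.mul_div_cancel' hdvd
          have hcast : ((n / d : ℕ) : ℝ) = (n : ℝ) / d := by
            rw [Nat.cast_div hdvd (by exact_mod_cast hd0)]
          rw [hmul, hcast]
          have hdR : (d : ℝ) ≠ 0 := by exact_mod_cast hd0
          have hnR : (n : ℝ) ≠ 0 := by exact_mod_cast hn0
          field_simp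
          try ring
        rw [Finset.sum_congr rfl hterm, ← Finset.sum_mul]
        rw [show ∑ d ∈ n.divisors, (Nat.totient d : ℝ) = ((∑ d ∈ n.divisors, Nat.totient d : ℕ) : ℝ)
          by push_cast; ring]
        rw [Nat.sum_totient]
        have hnR : (n : ℝ) ≠ 0 := by exact_mod_cast hn.ne'
        rw [hg]
        simp only [hn.ne', if_false]
        field_simp
      rw [hval] at this
      have hfun : ((F ∘ ((↑) : Nat.divisorsAntidiagonal n → ℕ × ℕ)) ∘ ⇑(Equiv.subtypeEquivRight hmem))
          = fun c : {p : ℕ × ℕ // m p = n} => (F ∘ (Equiv.sigmaFiberEquiv m)) ⟨n, c⟩ := by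
        funext c; rfl
      rwa [hfun] at this
  have hg_sum : HasSum g S := hSe.sigma hfiber_n
  -- compute the sum of g
  have hgeom : HasSum (fun n : ℕ => y ^ n) (1 - y)⁻¹ :=
    hasSum_geometric_of_abs_lt_one h
  have hupd : HasSum (Function.update (fun n : ℕ => y ^ n) 0 0) (0 - y ^ 0 + (1 - y)⁻¹) :=
    hgeom.update 0 0
  have hgu : g = Function.update (fun n : ℕ => y ^ n) 0 0 := by
    funext n
    rw [Function.update_apply, hg]
  have hy1 : (1 : ℝ) - y ≠ 0 := by
    have : y < 1 := lt_of_le_of_lt (le_abs_self y) h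
    linarith
  have hg_val : HasSum g (y / (1 - y)) := by
    rw [hgu]
    convert hupd using 1
    rw [pow_zero]
    field_simp
    ring
  have : S = y / (1 - y) := hg_sum.unique hg_val
  rwa [this] at hd_sum

/-- For `|y| < 1`, the infinite product `∏_{d ≥ 1} (1 − y^d)^{φ(d)/d}` (real powers of the
positive reals `1 − y^d`) has value `exp(−y/(1 − y))`. -/
theorem prod_one_sub_pow_totient (y : ℝ) (h : |y| < 1) :
    HasProd (fun d : {d : ℕ // 1 ≤ d} =>
        (1 - y ^ d.val) ^ ((Nat.totient d.val : ℝ) / (d.val : ℝ)))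
      (Real.exp (-y / (1 - y))) := by
  have h1 := (aux_hasSum h).neg
  simp only [neg_mul_eq_mul_neg, neg_neg] at h1
  -- h1 : HasSum (fun d => (φ d / d) * log (1 - y ^ d)) (-(y / (1 - y)))
  set f : ℕ → ℝ := fun d => ((Nat.totient d : ℝ) / d) * Real.log (1 - y ^ d) with hf
  have hsupp : Function.support f ⊆ {d : ℕ | 1 ≤ d} := by
    intro d hd
    by_contra hd1
    simp only [Set.mem_setOf_eq, not_le, Nat.lt_one_iff] at hd1
    subst hd1
    simp [hf] at hd
  have h2 : HasSum (fun d : {d : ℕ // 1 ≤ d} => f d.val) (-(y / (1 - y))) :=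
    (hasSum_subtype_iff_of_support_subset hsupp).mpr h1
  have h3 := h2.rexp
  have heq : (rexp ∘ fun d : {d : ℕ // 1 ≤ d} => f d.val)
      = fun d : {d : ℕ // 1 ≤ d} =>
        (1 - y ^ d.val) ^ ((Nat.totient d.val : ℝ) / (d.val : ℝ)) := by
    funext d
    simp only [Function.comp_apply, hf]
    rw [Real.rpow_def_of_pos (aux_pos h d.2)]
    ring_nf
  rw [heq] at h3
  rwa [neg_div]
end

section
/- Let n ≥ 1 and 0 ≤ m ≤ n be integers and i an integer. Let b_i(n,m) be the number of m-element subsets J of {0, 1, …, n−1} such that Σ_{j∈J} j ≡ i (mod n). Then n·b_i(n,m) = (−1)^m · Σ_{d | gcd(n,m)} (−1)^{m/d} · c_d(i) · binomial(n/d, m/d), where d runs over the positive common divisors of n and m (with every positive integer dividing 0). -/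
open Finset Polynomial

/-- The Ramanujan sum `c_d(i) = Σ_{e | gcd(d,i)} μ(d/e)·e`. -/
def ramanujanSum (d : ℕ) (i : ℤ) : ℤ :=
  ∑ e ∈ (Nat.gcd d i.natAbs).divisors, ArithmeticFunction.moebius (d / e) * (e : ℤ)


lemma orth {d : ℕ} (hd : 0 < d) {η : ℂ} (hη : IsPrimitiveRoot η d) (j : ℤ) :
    ∑ k ∈ range d, η ^ ((k : ℤ) * j) = if (d : ℤ) ∣ j then (d : ℂ) else 0 := by
  have key : ∀ k ∈ range d, η ^ ((k:ℤ)*j) = (η ^ j) ^ k := by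
    intro k _; rw [mul_comm, zpow_mul, zpow_natCast]
  rw [Finset.sum_congr rfl key]
  by_cases h : (d:ℤ) ∣ j
  · rw [if_pos h]
    have h1 : η ^ j = 1 := (hη.zpow_eq_one_iff_dvd j).mpr h
    simp [h1]
  · rw [if_neg h]
    have h1 : η ^ j ≠ 1 := fun hc => h ((hη.zpow_eq_one_iff_dvd j).mp hc)
    rw [geom_sum_eq h1]
    have h2 : (η ^ j) ^ d = 1 := by
      rw [← zpow_natCast, ← zpow_mul, mul_comm, zpow_mul, zpow_natCast, hη.pow_eq_one, one_zpow]
    simp [h2]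

lemma divisors_gcd_eq (d : ℕ) (hd : d ≠ 0) (a : ℕ) :
    (Nat.gcd d a).divisors = d.divisors.filter (· ∣ a) := by
  ext f
  simp only [Nat.mem_divisors, Finset.mem_filter, Nat.dvd_gcd_iff]
  constructor
  · rintro ⟨⟨h1, h2⟩, -⟩; exact ⟨⟨h1, hd⟩, h2⟩
  · rintro ⟨⟨h1, -⟩, h2⟩
    exact ⟨⟨h1, h2⟩, fun hc => hd (Nat.eq_zero_of_gcd_eq_zero_left hc)⟩

lemma sum_moebius_div (n : ℕ) :
    ∑ e ∈ n.divisors, (ArithmeticFunction.moebius e : ℤ) = if n = 1 then 1 else 0 := by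
  rw [← ArithmeticFunction.coe_mul_zeta_apply, ArithmeticFunction.moebius_mul_coe_zeta,
    ArithmeticFunction.one_apply]

lemma ramanujan_sum_eq {d : ℕ} (hd : 0 < d) {η : ℂ} (hη : IsPrimitiveRoot η d) (j : ℤ) :
    ∑ t ∈ (range d).filter (fun t => Nat.gcd t d = 1), η ^ ((t : ℤ) * j)
      = ((∑ e ∈ (Nat.gcd d j.natAbs).divisors,
          ArithmeticFunction.moebius (d / e) * (e : ℤ) : ℤ) : ℂ) := by
  rw [Finset.sum_filter]
  have step2 : ∀ t ∈ range d, (if Nat.gcd t d = 1 then η ^ ((t:ℤ)*j) else 0)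
      = ∑ e ∈ d.divisors, (if e ∣ t then (ArithmeticFunction.moebius e : ℂ) * η ^ ((t:ℤ)*j) else 0) := by
    intro t _
    rw [← Finset.sum_filter, ← Finset.sum_mul, ← divisors_gcd_eq d hd.ne' t]
    have : ((∑ e ∈ (Nat.gcd d t).divisors, (ArithmeticFunction.moebius e : ℤ) : ℤ) : ℂ)
        = if Nat.gcd t d = 1 then 1 else 0 := by
      rw [sum_moebius_div, Nat.gcd_comm]
      split <;> simp
    push_cast at this
    rw [this]
    split <;> simp
  rw [Finset.sum_congr rfl step2, Finset.sum_comm]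
  have step4 : ∀ e ∈ d.divisors,
      ∑ t ∈ range d, (if e ∣ t then (ArithmeticFunction.moebius e : ℂ) * η ^ ((t:ℤ)*j) else 0)
      = (ArithmeticFunction.moebius e : ℂ) * (if ((d/e : ℕ) : ℤ) ∣ j then ((d/e : ℕ) : ℂ) else 0) := by
    intro e he
    rw [Nat.mem_divisors] at he
    obtain ⟨hed, -⟩ := he
    have he0 : 0 < e := Nat.pos_of_dvd_of_pos hed hd
    have hde0 : 0 < d / e := Nat.div_pos (Nat.le_of_dvd hd hed) he0
    rw [← Finset.sum_filter]
    have reindex : ∑ t ∈ (range d).filter (fun t => e ∣ t),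
        (ArithmeticFunction.moebius e : ℂ) * η ^ ((t:ℤ)*j)
        = ∑ s ∈ range (d / e), (ArithmeticFunction.moebius e : ℂ) * (η ^ e) ^ ((s:ℤ)*j) := by
      refine Finset.sum_nbij' (i := fun t => t / e) (j := fun s => e * s) ?_ ?_ ?_ ?_ ?_
      · intro t ht
        rw [mem_filter, mem_range] at ht
        rw [mem_range]
        exact Nat.div_lt_div_of_lt_of_dvd hed ht.1
      · intro s hs
        rw [mem_range] at hs
        rw [mem_filter, mem_range]
        refine ⟨?_, Dvd.intro s rfl⟩
        calc e * s < e * (d / e) := (Nat.mul_lt_mul_left he0).2 hs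
        _ = d := Nat.mul_div_cancel' hed
      · intro t ht
        rw [mem_filter] at ht
        exact Nat.mul_div_cancel' ht.2
      · intro s hs
        exact Nat.mul_div_cancel_left _ he0
      · intro t ht
        rw [mem_filter] at ht
        obtain ⟨s, hs⟩ := ht.2
        subst hs
        beta_reduce
        rw [Nat.mul_div_cancel_left _ he0]
        congr 1
        rw [← zpow_natCast η e, ← zpow_mul]
        congr 1
        push_cast
        ring
    rw [reindex, ← Finset.mul_sum]
    congr 1
    exact orth hde0 (hη.pow hd (Nat.mul_div_cancel' hed).symm) j
  rw [Finset.sum_congr rfl step4]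
  have step5 : ∑ e ∈ d.divisors, (ArithmeticFunction.moebius e : ℂ) *
        (if ((d/e : ℕ) : ℤ) ∣ j then ((d/e : ℕ) : ℂ) else 0)
      = ∑ f ∈ d.divisors, (ArithmeticFunction.moebius (d / f) : ℂ) *
        (if ((f : ℕ) : ℤ) ∣ j then ((f : ℕ) : ℂ) else 0) := by
    rw [← Nat.sum_div_divisors d
      (fun f => (ArithmeticFunction.moebius (d / f) : ℂ) * (if ((f:ℕ):ℤ) ∣ j then ((f:ℕ):ℂ) else 0))]
    apply Finset.sum_congr rfl
    intro e he
    rw [Nat.mem_divisors] at he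
    rw [Nat.div_div_self he.1 he.2]
  rw [step5]
  rw [divisors_gcd_eq d hd.ne' j.natAbs]
  rw [Finset.sum_filter]
  push_cast
  apply Finset.sum_congr rfl
  intro f hf
  by_cases h : (f : ℤ) ∣ j
  · rw [if_pos h, if_pos (Int.natCast_dvd.mp h)]
  · rw [if_neg h, if_neg (fun hc => h (Int.natCast_dvd.mpr hc)), mul_zero]


lemma prod_blocks {x : ℂ} {d : ℕ} (hxd : x ^ d = 1) (g : ℕ) :
    ∏ j ∈ range (g * d), (X + C (x ^ j)) = (∏ r ∈ range d, (X + C (x ^ r))) ^ g := by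
  induction g with
  | zero => simp
  | succ g ih =>
    rw [Nat.succ_mul, Finset.prod_range_add, ih, pow_succ]
    congr 1
    apply Finset.prod_congr rfl
    intro r _
    rw [pow_add, mul_comm g d, pow_mul, hxd, one_pow, one_mul]

lemma prod_prim {x : ℂ} {d : ℕ} (hd : 0 < d) (hx : IsPrimitiveRoot x d) :
    ∏ r ∈ range d, (X + C (x ^ r)) = X ^ d - C ((-1 : ℂ) ^ d) := by
  have h := X_pow_sub_C_eq_prod hx hd (α := (-1 : ℂ)) rfl
  rw [h]
  apply Finset.prod_congr rfl
  intro r _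
  rw [mul_neg_one, map_neg, sub_neg_eq_add]

lemma esymm_prim {n d m : ℕ} (hn : 0 < n) (hd : d ∣ n) (hm : m ≤ n) {x : ℂ}
    (hx : IsPrimitiveRoot x d) :
    ∑ J ∈ (univ : Finset (Fin n)).powersetCard m, ∏ j ∈ J, x ^ (j : ℕ)
      = if d ∣ m then (-1 : ℂ) ^ (m + m / d) * (Nat.choose (n / d) (m / d) : ℂ) else 0 := by
  have hd0 : 0 < d := Nat.pos_of_dvd_of_pos hd hn
  have hmn : n - m ≤ #(univ : Finset (Fin n)) := by simp [Nat.sub_le]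
  have h1 := Finset.prod_X_add_C_coeff (univ : Finset (Fin n))
    (fun j => x ^ (j : ℕ)) hmn
  have hcard : #(univ : Finset (Fin n)) - (n - m) = m := by simp; omega
  rw [hcard] at h1
  rw [← h1, Fin.prod_univ_eq_prod_range (fun j => X + C (x ^ j)) n]
  obtain ⟨g, hg⟩ : ∃ g, n = g * d := ⟨n / d, (Nat.div_mul_cancel hd).symm⟩
  have hnd : n / d = g := by rw [hg, Nat.mul_div_cancel _ hd0]
  have hprod : ∏ j ∈ range n, (X + C (x ^ j)) = (X ^ d - C ((-1:ℂ) ^ d)) ^ g := by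
    rw [hg, prod_blocks hx.pow_eq_one, prod_prim hd0 hx]
  have hexp : (X ^ d - C ((-1:ℂ) ^ d)) ^ g
      = ∑ t ∈ range (g+1), C ((-(-1:ℂ) ^ d) ^ (g - t) * (g.choose t : ℂ)) * X ^ (d * t) := by
    rw [sub_eq_add_neg, ← map_neg C, add_pow]
    apply Finset.sum_congr rfl
    intro t _
    rw [← pow_mul, ← map_pow, mul_assoc, ← map_natCast (C : ℂ →+* ℂ[X]) (g.choose t),
      ← map_mul, mul_comm]
  rw [hprod, hexp, finset_sum_coeff]
  simp only [coeff_C_mul_X_pow]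
  by_cases hdm : d ∣ m
  · rw [if_pos hdm]
    obtain ⟨m', hm'⟩ := hdm
    have hmd : m / d = m' := by rw [hm', Nat.mul_div_cancel_left _ hd0]
    have hm'g : m' ≤ g := by
      by_contra hc
      push_neg at hc
      have : n < m := by
        calc n = g * d := hg
        _ < m' * d := (Nat.mul_lt_mul_right hd0).2 hc
        _ = m := by rw [hm', mul_comm]
      omega
    set q := g - m' with hq
    have hgq : g = q + m' := by omega
    have hn2 : n = d * q + m := by rw [hg, hgq, hm']; ring
    have key : ∀ t ∈ range (g+1),
        (if n - m = d * t then ((-(-1:ℂ)^d)^(g-t) * (g.choose t : ℂ)) else 0)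
        = if t = q then ((-(-1:ℂ)^d)^(g-t) * (g.choose t : ℂ)) else 0 := by
      intro t _
      refine if_congr ?_ rfl rfl
      constructor
      · intro h
        have : d * q = d * t := by omega
        exact (Nat.eq_of_mul_eq_mul_left hd0 this).symm
      · intro h; rw [h]; omega
    rw [Finset.sum_congr rfl key, Finset.sum_ite_eq' (range (g+1)) q]
    rw [if_pos (by simp [mem_range]; omega)]
    have hgq2 : g - q = m' := by omega
    have hch : g.choose q = (n/d).choose (m/d) := by
      rw [hnd, hmd, hq, Nat.choose_symm hm'g]
    have hsign : (-(-1:ℂ)^d)^(g - q) = (-1:ℂ)^(m + m/d) := by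
      rw [hgq2, hmd, neg_pow, ← pow_mul, ← hm', ← pow_add, add_comm]
    rw [hch, hsign]
  · rw [if_neg hdm]
    apply Finset.sum_eq_zero
    intro t _
    rw [if_neg]
    intro hc
    have h1 : d ∣ n - m := ⟨t, hc⟩
    have h2 : n - (n - m) = m := by omega
    exact hdm (h2 ▸ Nat.dvd_sub hd h1)


lemma sum_range_divisors {M : Type*} [AddCommMonoid M] (n : ℕ) (hn : 0 < n) (f : ℕ → M) :
    ∑ k ∈ range n, f k
      = ∑ d ∈ n.divisors, ∑ t ∈ (range d).filter (fun t => Nat.gcd t d = 1), f (n / d * t) := by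
  conv_rhs => rw [Finset.sum_sigma']
  refine Finset.sum_nbij' (i := fun k => ⟨n / Nat.gcd n k, k / Nat.gcd n k⟩)
    (j := fun p => n / p.1 * p.2) ?_ ?_ ?_ ?_ ?_
  · intro k hk
    rw [mem_range] at hk
    have hg0 : 0 < Nat.gcd n k := Nat.gcd_pos_of_pos_left k hn
    have hgn : Nat.gcd n k ∣ n := Nat.gcd_dvd_left n k
    have hgk : Nat.gcd n k ∣ k := Nat.gcd_dvd_right n k
    refine Finset.mem_sigma.2 ⟨Nat.mem_divisors.2 ⟨Nat.div_dvd_of_dvd hgn, hn.ne'⟩, ?_⟩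
    rw [mem_filter, mem_range]
    constructor
    · exact Nat.div_lt_div_of_lt_of_dvd hgn hk
    · have := Nat.coprime_div_gcd_div_gcd (m := n) (n := k) hg0
      exact Nat.Coprime.gcd_eq_one (Nat.Coprime.symm this)
  · intro p hp
    rw [Finset.mem_sigma, Nat.mem_divisors, mem_filter, mem_range] at hp
    obtain ⟨⟨hd, hn0⟩, ht, -⟩ := hp
    have hd0 : 0 < p.1 := Nat.pos_of_dvd_of_pos hd hn
    have hnd0 : 0 < n / p.1 := Nat.div_pos (Nat.le_of_dvd hn hd) hd0
    rw [mem_range]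
    calc n / p.1 * p.2 < n / p.1 * p.1 := (Nat.mul_lt_mul_left hnd0).2 ht
    _ = n := Nat.div_mul_cancel hd
  · intro k hk
    show n / (n / Nat.gcd n k) * (k / Nat.gcd n k) = k
    rw [Nat.div_div_self (Nat.gcd_dvd_left n k) hn.ne']
    exact Nat.mul_div_cancel' (Nat.gcd_dvd_right n k)
  · intro p hp
    rw [Finset.mem_sigma, Nat.mem_divisors, mem_filter, mem_range] at hp
    obtain ⟨⟨hd, hn0⟩, ht, hcop⟩ := hp
    have hd0 : 0 < p.1 := Nat.pos_of_dvd_of_pos hd hn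
    have hnd0 : 0 < n / p.1 := Nat.div_pos (Nat.le_of_dvd hn hd) hd0
    set a := n / p.1 with ha
    have han : n = a * p.1 := (Nat.div_mul_cancel hd).symm
    have hgcd : Nat.gcd n (a * p.2) = a := by
      rw [han, Nat.gcd_mul_left, Nat.gcd_comm, hcop, mul_one]
    show (⟨n / Nat.gcd n (a * p.2), (a * p.2) / Nat.gcd n (a * p.2)⟩ : (_ : ℕ) × ℕ) = p
    rw [hgcd, ha, Nat.div_div_self hd hn.ne', Nat.mul_div_cancel_left _ hnd0]
  · intro k hk
    rw [Nat.div_div_self (Nat.gcd_dvd_left n k) hn.ne',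
      Nat.mul_div_cancel' (Nat.gcd_dvd_right n k)]

/-- For `n ≥ 1`, `0 ≤ m ≤ n` and an integer `i`, let `b_i(n,m)` be the number of
`m`-element subsets `J` of `{0,…,n-1}` with `Σ_{j∈J} j ≡ i (mod n)`.  Then
`n·b_i(n,m) = (−1)^m Σ_{d | gcd(n,m)} (−1)^{m/d} c_d(i) binom(n/d, m/d)`. -/
theorem dim_isotypic_exterior (n m : ℕ) (hn : 1 ≤ n) (hm : m ≤ n) (i : ℤ) :
    (n : ℤ) *
      (Nat.card {J : Finset (Fin n) //
        J.card = m ∧ (∑ j ∈ J, (j : ℤ)) ≡ i [ZMOD (n : ℤ)]} : ℤ) =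
    (-1) ^ m *
      ∑ d ∈ (Nat.gcd n m).divisors,
        (-1) ^ (m / d) * ramanujanSum d i * (Nat.choose (n / d) (m / d) : ℤ) := by
  classical
  have hn0 : 0 < n := hn
  set S : Finset (Finset (Fin n)) := (univ : Finset (Fin n)).powersetCard m with hSdef
  set T : Finset (Finset (Fin n)) :=
    S.filter (fun J => (∑ j ∈ J, (j : ℤ)) ≡ i [ZMOD (n : ℤ)]) with hTdef
  have hNat : (Nat.card {J : Finset (Fin n) //
      J.card = m ∧ (∑ j ∈ J, (j : ℤ)) ≡ i [ZMOD (n : ℤ)]}) = T.card := by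
    rw [Nat.card_eq_fintype_card, Fintype.card_subtype]
    congr 1
    ext J
    simp only [hTdef, hSdef, Finset.mem_filter, Finset.mem_powersetCard_univ, Finset.mem_univ,
      true_and]
  rw [hNat]
  refine Int.cast_injective (α := ℂ) ?_
  push_cast
  obtain ⟨ζ, hζ⟩ : ∃ ζ : ℂ, IsPrimitiveRoot ζ n :=
    ⟨_, Complex.isPrimitiveRoot_exp n hn0.ne'⟩
  have hzero : ζ ≠ 0 := hζ.ne_zero hn0.ne'
  set E : ℕ → ℂ := fun k => ∑ J ∈ S, ∏ j ∈ J, (ζ ^ k) ^ (j : ℕ) with hEdef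
  have e1 : (n : ℂ) * (T.card : ℂ)
      = ∑ J ∈ S, (if (∑ j ∈ J, (j : ℤ)) ≡ i [ZMOD (n : ℤ)] then (n : ℂ) else 0) := by
    rw [← Finset.sum_filter, ← hTdef, Finset.sum_const, nsmul_eq_mul, mul_comm]
  have e2 : ∀ J ∈ S, (if (∑ j ∈ J, (j : ℤ)) ≡ i [ZMOD (n : ℤ)] then (n : ℂ) else 0)
      = ∑ k ∈ range n, ζ ^ ((k : ℤ) * ((∑ j ∈ J, (j : ℤ)) - i)) := by
    intro J _
    rw [orth hn0 hζ ((∑ j ∈ J, (j : ℤ)) - i)]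
    exact (if_congr (dvd_sub_comm.trans Int.modEq_iff_dvd.symm) rfl rfl).symm
  have e3 : ∀ J ∈ S, ∀ k ∈ range n,
      ζ ^ ((k : ℤ) * ((∑ j ∈ J, (j : ℤ)) - i))
      = (∏ j ∈ J, (ζ ^ k) ^ (j : ℕ)) * ζ ^ ((k : ℤ) * (-i)) := by
    intro J _ k _
    have hjsum : (∑ j ∈ J, (j : ℤ)) = ((∑ j ∈ J, (j : ℕ) : ℕ) : ℤ) := by push_cast; rfl
    rw [hjsum, show (k : ℤ) * (((∑ j ∈ J, (j : ℕ) : ℕ) : ℤ) - i)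
        = ((k * (∑ j ∈ J, (j : ℕ)) : ℕ) : ℤ) + (k : ℤ) * (-i) by push_cast; ring,
      zpow_add₀ hzero, zpow_natCast, pow_mul, ← Finset.prod_pow_eq_pow_sum]
  have e4 : (n : ℂ) * (T.card : ℂ)
      = ∑ k ∈ range n, ζ ^ ((k : ℤ) * (-i)) * E k := by
    rw [e1, Finset.sum_congr rfl e2]
    rw [Finset.sum_congr rfl (fun J hJ => Finset.sum_congr rfl (e3 J hJ))]
    rw [Finset.sum_comm]
    apply Finset.sum_congr rfl
    intro k _
    rw [← Finset.sum_mul, mul_comm]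
  rw [e4, sum_range_divisors n hn0 (fun k => ζ ^ ((k : ℤ) * (-i)) * E k)]
  have e5 : ∀ d ∈ n.divisors,
      ∑ t ∈ (range d).filter (fun t => Nat.gcd t d = 1),
        ζ ^ (((n / d * t : ℕ) : ℤ) * (-i)) * E (n / d * t)
      = (if d ∣ m then (-1 : ℂ) ^ (m + m / d) * (Nat.choose (n / d) (m / d) : ℂ) else 0)
          * (ramanujanSum d i : ℂ) := by
    intro d hdmem
    rw [Nat.mem_divisors] at hdmem
    obtain ⟨hdn, -⟩ := hdmem
    have hd0 : 0 < d := Nat.pos_of_dvd_of_pos hdn hn0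
    have hη : IsPrimitiveRoot (ζ ^ (n / d)) d := hζ.pow hn0 (Nat.div_mul_cancel hdn).symm
    have hterm : ∀ t ∈ (range d).filter (fun t => Nat.gcd t d = 1),
        ζ ^ (((n / d * t : ℕ) : ℤ) * (-i)) * E (n / d * t)
        = (ζ ^ (n / d)) ^ ((t : ℤ) * (-i))
            * (if d ∣ m then (-1 : ℂ) ^ (m + m / d) * (Nat.choose (n / d) (m / d) : ℂ) else 0) := by
      intro t ht
      rw [mem_filter] at ht
      have hx : IsPrimitiveRoot ((ζ ^ (n / d)) ^ t) d := hη.pow_of_coprime t ht.2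
      have hE : E (n / d * t)
          = if d ∣ m then (-1 : ℂ) ^ (m + m / d) * (Nat.choose (n / d) (m / d) : ℂ) else 0 := by
        rw [hEdef]
        simp only
        rw [← esymm_prim hn0 hdn hm hx]
        apply Finset.sum_congr rfl
        intro J _
        apply Finset.prod_congr rfl
        intro j _
        rw [pow_mul]
      rw [hE]
      congr 1
      rw [← zpow_natCast ζ (n / d), ← zpow_mul]
      congr 1
      push_cast
      ring
    rw [Finset.sum_congr rfl hterm, ← Finset.sum_mul, ramanujan_sum_eq hd0 hη (-i)]
    rw [mul_comm]
    congr 2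
    rw [ramanujanSum, Int.natAbs_neg]
  rw [Finset.sum_congr rfl e5]
  simp only [ite_mul, zero_mul]
  rw [← Finset.sum_filter, ← divisors_gcd_eq n hn0.ne' m, Finset.mul_sum]
  apply Finset.sum_congr rfl
  intro d _
  rw [pow_add]
  ring
end

section
/- For every integer n ≥ 1 and every integer i, the number of (n−1)-element subsets J of {0, 1, …, 2n−2} with Σ_{j∈J} j ≡ i (mod 2n−1) equals the (n−1)-st Catalan number C_{n−1} = binomial(2(n−1), n−1)/n, independently of i. -/
open Finset



theorem mul_catalan_eq (k : ℕ) : (2*k+1) * catalan k = (2*k+1).choose k := by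
  apply Nat.eq_of_mul_eq_mul_left (show 0 < k+1 by omega)
  have h1 : (k+1) * catalan k = k.centralBinom := succ_mul_catalan_eq_centralBinom k
  have h2 := Nat.add_one_mul_choose_eq (2*k) k
  have h3 : (2*k+1).choose (k+1) = (2*k+1).choose k := by
    rw [← Nat.choose_symm (show k+1 ≤ 2*k+1 by omega)]
    congr 1; omega
  have h4 : k.centralBinom = (2*k).choose k := rfl
  calc (k+1) * ((2*k+1) * catalan k) = (2*k+1) * ((k+1) * catalan k) := by ring
    _ = (2*k+1) * (2*k).choose k := by rw [h1, h4]
    _ = (2*k+1).choose (k+1) * (k+1) := by simpa [Nat.succ_eq_add_one] using h2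
    _ = (k+1) * (2*k+1).choose k := by rw [h3]; ring

abbrev N (k : ℕ) (r : ZMod (2*k+1)) : ℕ :=
  (univ.filter fun J : Finset (ZMod (2*k+1)) => J.card = k ∧ ∑ j ∈ J, j = r).card

theorem counts_shift (k : ℕ) (r d : ZMod (2*k+1)) : N k r = N k (r + d) := by
  have hcop : Nat.Coprime k (2*k+1) := by
    have : 2*k+1 = 1 + k*2 := by ring
    rw [this, Nat.coprime_add_mul_left_right]
    exact Nat.coprime_one_right k
  have hu : IsUnit ((k : ZMod (2*k+1))) := (ZMod.isUnit_iff_coprime k (2*k+1)).2 hcop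
  obtain ⟨u, hu⟩ := hu
  set c : ZMod (2*k+1) := ↑u⁻¹ * d with hc
  have hkc : (k : ZMod (2*k+1)) * c = d := by
    rw [hc, ← hu, ← mul_assoc, ← Units.val_mul, mul_inv_cancel, Units.val_one, one_mul]
  apply Finset.card_nbij' (fun J => J.map (Equiv.addRight c).toEmbedding)
    (fun J => J.map (Equiv.addRight (-c)).toEmbedding)
  · intro J hJ
    simp only [Finset.mem_coe, mem_filter, mem_univ, true_and] at hJ ⊢
    obtain ⟨h1, h2⟩ := hJ
    constructor
    · simpa using h1
    · rw [Finset.sum_map]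
      simp only [Equiv.coe_toEmbedding, Equiv.coe_addRight]
      rw [Finset.sum_add_distrib, h2, Finset.sum_const, h1, nsmul_eq_mul, hkc]
  · intro J hJ
    simp only [Finset.mem_coe, mem_filter, mem_univ, true_and] at hJ ⊢
    obtain ⟨h1, h2⟩ := hJ
    constructor
    · simpa using h1
    · rw [Finset.sum_map]
      simp only [Equiv.coe_toEmbedding, Equiv.coe_addRight]
      rw [Finset.sum_add_distrib, h2, Finset.sum_const, h1, nsmul_eq_mul, mul_neg, hkc]
      abel
  · intro J _
    dsimp only
    rw [Finset.map_map]
    ext x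
    simp
  · intro J _
    dsimp only
    rw [Finset.map_map]
    ext x
    simp

theorem counts_const (k : ℕ) (r r' : ZMod (2*k+1)) : N k r = N k r' := by
  have := counts_shift k r (r' - r)
  simpa using this

theorem total_count (k : ℕ) : ∑ r : ZMod (2*k+1), N k r = (2*k+1).choose k := by
  have h : (univ.filter fun J : Finset (ZMod (2*k+1)) => J.card = k).card
      = (2*k+1).choose k := by
    rw [← Finset.powerset_univ, ← Finset.powersetCard_eq_filter, Finset.card_powersetCard]
    congr 1
    simp [ZMod.card]
  rw [← h]
  rw [Finset.card_eq_sum_card_fiberwise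
    (f := fun J : Finset (ZMod (2*k+1)) => ∑ j ∈ J, j) (t := univ) (fun x _ => mem_univ _)]
  apply Finset.sum_congr rfl
  intro r _
  rw [Finset.filter_filter]

theorem N_eq_catalan (k : ℕ) (r : ZMod (2*k+1)) : N k r = catalan k := by
  have htot : (2*k+1) * N k r = (2*k+1) * catalan k := by
    rw [mul_catalan_eq, ← total_count k]
    rw [Finset.sum_congr rfl (fun r' _ => counts_const k r' r), Finset.sum_const]
    simp [ZMod.card, mul_comm]
  exact Nat.eq_of_mul_eq_mul_left (by omega) htot


/-- For every `n ≥ 1` and every integer `i`, the number of `(n−1)`-element subsets `J` of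
`{0,…,2n−2}` with `Σ_{j∈J} j ≡ i (mod 2n−1)` is the `(n−1)`-st Catalan number,
independently of `i`. -/
theorem count_subsets_eq_catalan (n : ℕ) (hn : 1 ≤ n) (i : ℤ) :
    Nat.card {J : Finset (Fin (2 * n - 1)) //
      J.card = n - 1 ∧ (∑ j ∈ J, (j : ℤ)) ≡ i [ZMOD ((2 * n - 1 : ℕ) : ℤ)]} =
    catalan (n - 1) := by
  obtain ⟨k, rfl⟩ : ∃ k, n = k + 1 := ⟨n - 1, by omega⟩
  have hm : 2 * (k + 1) - 1 = 2 * k + 1 := by omega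
  simp only [hm, Nat.add_sub_cancel]
  classical
  rw [Nat.card_eq_fintype_card, Fintype.card_subtype]
  rw [← N_eq_catalan k ((i : ZMod (2*k+1)))]
  apply Finset.card_nbij' (fun J => J.image (fun j : Fin (2*k+1) => ((j : ℕ) : ZMod (2*k+1))))
    (fun K => K.image (fun x : ZMod (2*k+1) => (⟨x.val, ZMod.val_lt x⟩ : Fin (2*k+1))))
  · intro J hJ
    simp only [Finset.mem_coe, mem_filter, mem_univ, true_and] at hJ ⊢
    obtain ⟨h1, h2⟩ := hJ
    have hinj : Function.Injective (fun j : Fin (2*k+1) => ((j : ℕ) : ZMod (2*k+1))) := by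
      intro a b hab
      have := congrArg ZMod.val hab
      simp only [ZMod.val_cast_of_lt a.isLt, ZMod.val_cast_of_lt b.isLt] at this
      exact Fin.ext this
    refine ⟨by rw [Finset.card_image_of_injective _ hinj, h1], ?_⟩
    rw [Finset.sum_image (fun a _ b _ h => hinj h)]
    have := (ZMod.intCast_eq_intCast_iff _ _ _).2 h2
    rw [← this]
    push_cast
    rfl
  · intro K hK
    simp only [Finset.mem_coe, mem_filter, mem_univ, true_and] at hK ⊢
    obtain ⟨h1, h2⟩ := hK
    have hinj : Function.Injective (fun x : ZMod (2*k+1) => (⟨x.val, ZMod.val_lt x⟩ : Fin (2*k+1))) := by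
      intro a b hab
      have : a.val = b.val := congrArg Fin.val hab
      exact ZMod.val_injective _ this
    refine ⟨by rw [Finset.card_image_of_injective _ hinj, h1], ?_⟩
    rw [← ZMod.intCast_eq_intCast_iff]
    push_cast
    refine Eq.trans (Finset.sum_image (fun a _ b _ h => hinj h)) ?_
    rw [← h2]
    apply Finset.sum_congr rfl
    intro x _
    simp [ZMod.natCast_val, ZMod.cast_id]
  · intro J _
    dsimp only
    rw [Finset.image_image]
    have : ∀ j : Fin (2*k+1),
        (fun x : ZMod (2*k+1) => (⟨x.val, ZMod.val_lt x⟩ : Fin (2*k+1)))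
          (((j : ℕ) : ZMod (2*k+1))) = j := by
      intro j
      exact Fin.ext (ZMod.val_cast_of_lt j.isLt)
    calc J.image _ = J.image id := Finset.image_congr (fun j _ => this j)
      _ = J := Finset.image_id
  · intro K _
    dsimp only
    rw [Finset.image_image]
    have : ∀ x : ZMod (2*k+1),
        (fun j : Fin (2*k+1) => ((j : ℕ) : ZMod (2*k+1)))
          ((⟨x.val, ZMod.val_lt x⟩ : Fin (2*k+1))) = x := by
      intro x
      simp [ZMod.natCast_val, ZMod.cast_id]
    calc K.image _ = K.image id := Finset.image_congr (fun x _ => this x)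
      _ = K := Finset.image_id
end

section
/- Let G be a finite abelian group, written additively, of order n. Let N_G be the number of subsets S of G such that Σ_{g∈S} g = 0 (with the empty sum equal to 0). Then n · N_G = Σ_{d | n, d odd} φ_G(d) · 2^{n/d}, where the sum is over the odd positive divisors d of n and φ_G(d) denotes the number of elements of G of order exactly d. -/
open Finset

section Aux

open Polynomial

variable {G : Type*} [AddCommGroup G] [Fintype G] [DecidableEq G]

/-- An additive character maps sums to products. -/
lemma addChar_map_sum (ψ : AddChar G ℂ) (S : Finset G) :
    ψ (∑ g ∈ S, g) = ∏ g ∈ S, ψ g := by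
  induction S using Finset.cons_induction with
  | empty => simp
  | cons a s ha ih => rw [Finset.sum_cons, AddChar.map_add_eq_mul, ih, Finset.prod_cons]

/-- Summing a character over all subsets. -/
lemma sum_subsets_addChar (ψ : AddChar G ℂ) :
    ∑ S : Finset G, ψ (∑ g ∈ S, g) = ∏ a : G, (1 + ψ a) := by
  classical
  have h1 : ∑ S : Finset G, ψ (∑ g ∈ S, g) = ∑ S ∈ (univ : Finset G).powerset,
      (∏ g ∈ S, ψ g) * ∏ g ∈ univ \ S, (1 : ℂ) := by
    rw [Finset.powerset_univ]
    refine Finset.sum_congr rfl fun S _ => ?_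
    rw [addChar_map_sum, Finset.prod_const_one, mul_one]
  rw [h1, ← Finset.prod_add]
  refine Finset.prod_congr rfl fun a _ => add_comm _ _

/-- The key product computation for a character of order `d`. -/
lemma prod_one_add_addChar (ψ : AddChar G ℂ) :
    ∏ a : G, (1 + ψ a) =
      if Odd (orderOf ψ) then (2 : ℂ) ^ (Fintype.card G / orderOf ψ) else 0 := by
  classical
  set n := Fintype.card G with hn
  set d := orderOf ψ with hdd
  have hd0 : 0 < d := orderOf_pos ψ
  have hroot : ∀ a : G, ψ a ^ d = 1 := by
    intro a
    have h := DFunLike.congr_fun (pow_orderOf_eq_one ψ) a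
    rw [AddChar.pow_apply, AddChar.one_apply] at h
    exact h
  have hne : ∀ a : G, ψ a ≠ 0 := by
    intro a ha
    have := hroot a
    rw [ha, zero_pow hd0.ne'] at this
    exact zero_ne_one this
  -- the unit-valued homomorphism
  let φ : Multiplicative G →* ℂˣ := (AddChar.toMonoidHomEquiv ψ).toHomUnits
  have hφψ : ∀ a : G, (φ (Multiplicative.ofAdd a) : ℂ) = ψ a := fun a => rfl
  let H : Subgroup ℂˣ := φ.range
  have hfin : Finite H := Set.finite_range φ
  set m := Nat.card H with hm
  -- `d = m`
  have hdm : d = m := by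
    refine Nat.dvd_antisymm ?_ ?_
    · refine orderOf_dvd_of_pow_eq_one ?_
      refine DFunLike.ext _ _ fun a => ?_
      have h1 : (⟨φ (Multiplicative.ofAdd a), ⟨_, rfl⟩⟩ : H) ^ m = 1 := pow_card_eq_one'
      have h2 : (φ (Multiplicative.ofAdd a)) ^ m = 1 := by
        simpa using congrArg Subtype.val h1
      have h3 : ψ a ^ m = 1 := by
        have := congrArg (Units.val) h2
        simpa [hφψ] using this
      simpa using h3
    · have hcyc : IsCyclic H := inferInstance
      rw [hm, ← IsCyclic.exponent_eq_card]
      refine Monoid.exponent_dvd_of_forall_pow_eq_one fun h => ?_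
      obtain ⟨x, hx⟩ := h.2
      refine Subtype.ext ?_
      refine Units.ext ?_
      push_cast
      have : ((h : ℂˣ) : ℂ) ^ d = 1 := by
        rw [← hx]
        exact hroot (Multiplicative.toAdd x)
      simpa using this
  -- the image of ψ
  set T : Finset ℂ := univ.image (fun a : G => ψ a) with hT
  have hTsub : T ⊆ nthRootsFinset d (1 : ℂ) := by
    intro z hz
    rw [hT, Finset.mem_image] at hz
    obtain ⟨a, -, rfl⟩ := hz
    exact (mem_nthRootsFinset hd0 1).2 (hroot a)
  have hTcard : T.card = d := by
    have h1 : T = (univ.image fun a : G => φ (Multiplicative.ofAdd a)).image Units.val := by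
      rw [hT, Finset.image_image]
      rfl
    have h2 : T.card = (univ.image fun a : G => φ (Multiplicative.ofAdd a)).card := by
      rw [h1]
      exact Finset.card_image_of_injective _ Units.val_injective
    have h3 : ((univ.image fun a : G => φ (Multiplicative.ofAdd a)) : Set ℂˣ) =
        Set.range φ := by
      ext z
      simp only [Finset.coe_image, Finset.coe_univ, Set.image_univ, Set.mem_range]
      constructor
      · rintro ⟨a, rfl⟩; exact ⟨Multiplicative.ofAdd a, rfl⟩
      · rintro ⟨x, rfl⟩; exact ⟨Multiplicative.toAdd x, rfl⟩
    have h4 : (univ.image fun a : G => φ (Multiplicative.ofAdd a)).card = m := by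
      rw [hm]
      have := Set.ncard_coe_finset (univ.image fun a : G => φ (Multiplicative.ofAdd a))
      rw [← this, h3, ← Nat.card_coe_set_eq, ← MonoidHom.coe_range]
      rfl
    rw [h2, h4, hdm]
  have hTeq : T = nthRootsFinset d (1 : ℂ) := by
    refine Finset.eq_of_subset_of_card_le hTsub ?_
    rw [hTcard, (Complex.isPrimitiveRoot_exp d hd0.ne').card_nthRootsFinset]
  -- fibers all have the same size
  set c := (univ.filter fun a : G => ψ a = 1).card with hc
  have hfib : ∀ z ∈ T, (univ.filter fun a : G => ψ a = z).card = c := by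
    intro z hz
    rw [hT, Finset.mem_image] at hz
    obtain ⟨a₀, -, rfl⟩ := hz
    rw [hc]
    refine (Finset.card_bij' (fun a _ => a₀ + a) (fun b _ => -a₀ + b) ?_ ?_ ?_ ?_).symm
    · intro a ha
      simp only [Finset.mem_filter, Finset.mem_univ, true_and] at ha ⊢
      rw [AddChar.map_add_eq_mul, ha, mul_one]
    · intro b hb
      simp only [Finset.mem_filter, Finset.mem_univ, true_and] at hb ⊢
      rw [AddChar.map_add_eq_mul, AddChar.map_neg_eq_inv, hb, inv_mul_cancel₀ (hne a₀)]
    · intro a _; exact neg_add_cancel_left a₀ a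
    · intro b _; exact add_neg_cancel_left a₀ b
  have hsum : n = d * c := by
    have h1 : n = ∑ z ∈ T, (univ.filter fun a : G => ψ a = z).card := by
      rw [hn, ← Finset.card_univ]
      exact Finset.card_eq_sum_card_fiberwise fun a _ =>
        Finset.mem_image_of_mem _ (Finset.mem_univ a)
    rw [h1, Finset.sum_congr rfl hfib, Finset.sum_const, smul_eq_mul, hTcard]
  have hc0 : 0 < c := by
    by_contra hcon
    push_neg at hcon
    interval_cases c
    · have : (n : ℕ) = 0 := by omega
      exact (Fintype.card_ne_zero (α := G)) (hn ▸ this)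
  have hnd : n / d = c := by rw [hsum]; exact Nat.mul_div_cancel_left c hd0
  -- the product over fibers
  have hmain : ∏ a : G, (1 + ψ a) = (∏ z ∈ T, (1 + z)) ^ (n / d) := by
    rw [← Finset.prod_fiberwise_of_maps_to
      (fun a (_ : a ∈ univ) => Finset.mem_image_of_mem (fun a : G => ψ a) (Finset.mem_univ a))
      (fun a => 1 + ψ a), ← Finset.prod_pow]
    refine Finset.prod_congr rfl fun z hz => ?_
    have : ∏ a ∈ univ.filter fun a : G => ψ a = z, (1 + ψ a)
        = ∏ _a ∈ univ.filter fun a : G => ψ a = z, (1 + z) := by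
      refine Finset.prod_congr rfl fun a ha => ?_
      rw [(Finset.mem_filter.1 ha).2]
    rw [this, Finset.prod_const, hfib z hz, hnd]
  -- the product of `1 + ζ` over the `d`-th roots of unity
  have hroots : ∏ z ∈ nthRootsFinset d (1 : ℂ), (1 + z) = 1 - (-1 : ℂ) ^ d := by
    have h := Polynomial.X_pow_sub_one_eq_prod hd0 (Complex.isPrimitiveRoot_exp d hd0.ne')
    have h2 := congrArg (Polynomial.eval (-1 : ℂ)) h
    simp only [Polynomial.eval_sub, Polynomial.eval_pow, Polynomial.eval_X, Polynomial.eval_one,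
      Polynomial.eval_prod, Polynomial.eval_C] at h2
    have h3 : ∏ z ∈ nthRootsFinset d (1 : ℂ), (-1 - z : ℂ)
        = (-1) ^ d * ∏ z ∈ nthRootsFinset d (1 : ℂ), (1 + z) := by
      calc ∏ z ∈ nthRootsFinset d (1 : ℂ), (-1 - z : ℂ)
          = ∏ z ∈ nthRootsFinset d (1 : ℂ), ((-1) * (1 + z) : ℂ) :=
            Finset.prod_congr rfl fun z _ => by ring
        _ = ((-1 : ℂ) ^ (nthRootsFinset d (1 : ℂ)).card) * ∏ z ∈ nthRootsFinset d (1 : ℂ), (1 + z) := by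
            rw [Finset.prod_mul_distrib, Finset.prod_const]
        _ = (-1) ^ d * ∏ z ∈ nthRootsFinset d (1 : ℂ), (1 + z) := by
            rw [(Complex.isPrimitiveRoot_exp d hd0.ne').card_nthRootsFinset]
    rw [h3] at h2
    have hunit : ((-1 : ℂ) ^ d) * ((-1 : ℂ) ^ d) = 1 := by
      rw [← pow_add]
      exact Even.neg_one_pow ⟨d, rfl⟩
    calc ∏ z ∈ nthRootsFinset d (1 : ℂ), (1 + z)
        = ((-1 : ℂ) ^ d * (-1 : ℂ) ^ d) * ∏ z ∈ nthRootsFinset d (1 : ℂ), (1 + z) := by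
          rw [hunit, one_mul]
      _ = (-1 : ℂ) ^ d * ((-1 : ℂ) ^ d - 1) := by rw [mul_assoc, ← h2]
      _ = 1 - (-1 : ℂ) ^ d := by rw [mul_sub, hunit]; ring
  rw [hmain, hTeq, hroots]
  by_cases hodd : Odd d
  · rw [if_pos hodd, hodd.neg_one_pow]
    norm_num
  · rw [if_neg hodd]
    rw [Nat.not_odd_iff_even] at hodd
    rw [hodd.neg_one_pow, sub_self, zero_pow]
    omega

/-- The number of characters of order `d` equals the number of elements of order `d`. -/
lemma card_addChar_orderOf_eq (d : ℕ) :
    Nat.card {ψ : AddChar G ℂ // orderOf ψ = d} = Nat.card {g : G // addOrderOf g = d} := by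
  haveI : NeZero ((Monoid.exponent (Multiplicative G) : ℂ)) :=
    ⟨Nat.cast_ne_zero.2 Monoid.exponent_ne_zero_of_finite⟩
  obtain ⟨e⟩ := CommGroup.monoidHom_mulEquiv_of_hasEnoughRootsOfUnity (Multiplicative G) ℂ
  let u : AddChar G ℂ ≃* (Multiplicative G →* ℂˣ) :=
    { toFun := fun ψ => (AddChar.toMonoidHomEquiv ψ).toHomUnits
      invFun := fun f => AddChar.toMonoidHomEquiv.symm ((Units.coeHom ℂ).comp f)
      left_inv := fun ψ => DFunLike.ext _ _ fun a => rfl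
      right_inv := fun f => MonoidHom.ext fun x => Units.ext rfl
      map_mul' := fun ψ χ => MonoidHom.ext fun x => Units.ext rfl }
  let F : AddChar G ℂ ≃* Multiplicative G := u.trans e
  refine Nat.card_congr ((F.toEquiv.trans Multiplicative.toAdd).subtypeEquiv fun ψ => ?_)
  have h : addOrderOf (Multiplicative.toAdd (F ψ)) = orderOf ψ := by
    rw [← orderOf_ofAdd_eq_addOrderOf, ofAdd_toAdd, MulEquiv.orderOf_eq]
  rw [Equiv.trans_apply,
    show addOrderOf (Multiplicative.toAdd (F.toEquiv ψ)) = orderOf ψ from h]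

end Aux

/-- For a finite abelian group `G` of order `n`, if `N_G` is the number of subsets of `G`
summing to `0`, then `n·N_G = Σ_{d | n, d odd} φ_G(d)·2^{n/d}`, where `φ_G(d)` is the
number of elements of `G` of order exactly `d`. -/
theorem card_zero_sum_subsets (G : Type*) [AddCommGroup G] [Fintype G] [DecidableEq G] :
    Fintype.card G * Nat.card {S : Finset G // (∑ g ∈ S, g) = 0} =
    ∑ d ∈ (Fintype.card G).divisors.filter (fun d => Odd d),
      Nat.card {g : G // addOrderOf g = d} * 2 ^ (Fintype.card G / d) := by
  classical
  set n := Fintype.card G with hn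
  have hn0 : n ≠ 0 := Fintype.card_ne_zero
  have hcard : Nat.card {S : Finset G // (∑ g ∈ S, g) = 0}
      = (univ.filter fun S : Finset G => (∑ g ∈ S, g) = 0).card := by
    rw [Nat.card_eq_fintype_card, Fintype.card_subtype]
  have horder : ∀ ψ : AddChar G ℂ, orderOf ψ ∈ n.divisors := by
    intro ψ
    refine Nat.mem_divisors.2 ⟨?_, hn0⟩
    have h := orderOf_dvd_card (x := ψ)
    rwa [AddChar.card_eq] at h
  -- the key identity over `ℂ`
  have key : ((n * Nat.card {S : Finset G // (∑ g ∈ S, g) = 0} : ℕ) : ℂ)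
      = ∑ d ∈ n.divisors.filter (fun d => Odd d),
          ((Nat.card {g : G // addOrderOf g = d} : ℂ) * 2 ^ (n / d)) := by
    calc ((n * Nat.card {S : Finset G // (∑ g ∈ S, g) = 0} : ℕ) : ℂ)
        = ∑ S : Finset G, (if (∑ g ∈ S, g) = 0 then (n : ℂ) else 0) := by
          rw [← Finset.sum_filter, Finset.sum_const, hcard]
          push_cast
          ring
      _ = ∑ S : Finset G, ∑ ψ : AddChar G ℂ, ψ (∑ g ∈ S, g) := by
          refine Finset.sum_congr rfl fun S _ => ?_
          rw [AddChar.sum_apply_eq_ite, hn]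
      _ = ∑ ψ : AddChar G ℂ, ∑ S : Finset G, ψ (∑ g ∈ S, g) := Finset.sum_comm
      _ = ∑ ψ : AddChar G ℂ, (if Odd (orderOf ψ) then (2 : ℂ) ^ (n / orderOf ψ) else 0) := by
          refine Finset.sum_congr rfl fun ψ _ => ?_
          rw [sum_subsets_addChar, prod_one_add_addChar, hn]
      _ = ∑ d ∈ n.divisors, ∑ ψ ∈ univ.filter fun ψ : AddChar G ℂ => orderOf ψ = d,
            (if Odd (orderOf ψ) then (2 : ℂ) ^ (n / orderOf ψ) else 0) :=
          (Finset.sum_fiberwise_of_maps_to (fun ψ _ => horder ψ) _).symm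
      _ = ∑ d ∈ n.divisors, ((univ.filter fun ψ : AddChar G ℂ => orderOf ψ = d).card : ℂ) *
            (if Odd d then (2 : ℂ) ^ (n / d) else 0) := by
          refine Finset.sum_congr rfl fun d hd => ?_
          rw [Finset.sum_congr rfl (fun ψ hψ => by rw [(Finset.mem_filter.1 hψ).2]),
            Finset.sum_const, nsmul_eq_mul]
      _ = ∑ d ∈ n.divisors, (if Odd d then
            ((univ.filter fun ψ : AddChar G ℂ => orderOf ψ = d).card : ℂ) * (2 : ℂ) ^ (n / d)
            else 0) := by
          refine Finset.sum_congr rfl fun d hd => ?_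
          rw [mul_ite, mul_zero]
      _ = ∑ d ∈ n.divisors.filter (fun d => Odd d),
            ((univ.filter fun ψ : AddChar G ℂ => orderOf ψ = d).card : ℂ) * (2 : ℂ) ^ (n / d) :=
          (Finset.sum_filter _ _).symm
      _ = ∑ d ∈ n.divisors.filter (fun d => Odd d),
            ((Nat.card {g : G // addOrderOf g = d} : ℂ) * 2 ^ (n / d)) := by
          refine Finset.sum_congr rfl fun d hd => ?_
          congr 1
          rw [← card_addChar_orderOf_eq (G := G) d, Nat.card_eq_fintype_card,
            Fintype.card_subtype]
  have : ((n * Nat.card {S : Finset G // (∑ g ∈ S, g) = 0} : ℕ) : ℂ)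
      = ((∑ d ∈ n.divisors.filter (fun d => Odd d),
          Nat.card {g : G // addOrderOf g = d} * 2 ^ (n / d) : ℕ) : ℂ) := by
    rw [key]
    push_cast
    rfl
  exact_mod_cast this
end

section
/- Let G be a finite abelian group, written additively, let π : G → G be a bijection, and let M be the multiset {g + π(g) : g ∈ G}. If a, b ∈ G are such that the element a + b belongs to M, then there exists a bijection σ : G → G with σ(a) = b and with the multiset {g + σ(g) : g ∈ G} equal to M. -/
open Finset

/-- Let `G` be a finite abelian group, `π` a bijection of `G`, and
`M = {g + π(g) : g ∈ G}` the associated multiset.  If `a + b ∈ M` for some `a, b ∈ G`,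
then there is a bijection `σ` of `G` with `σ(a) = b` producing the same multiset `M`. -/
theorem exists_perm_with_prescribed_value (G : Type*) [AddCommGroup G] [Fintype G]
    (π : Equiv.Perm G) (a b : G)
    (h : a + b ∈ Multiset.map (fun g => g + π g) Finset.univ.val) :
    ∃ σ : Equiv.Perm G, σ a = b ∧
      Multiset.map (fun g => g + σ g) Finset.univ.val =
        Multiset.map (fun g => g + π g) Finset.univ.val := by
  obtain ⟨g0, -, hg0⟩ := Multiset.mem_map.mp h
  set d := a - g0 with hd
  refine ⟨(Equiv.addRight (-d)).trans (π.trans (Equiv.addRight (-d))), ?_, ?_⟩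
  · simp only [Equiv.trans_apply, Equiv.coe_addRight, hd]
    have : a + -(a - g0) = g0 := by abel
    rw [this]
    have : π g0 = a + b - g0 := by rw [← hg0]; abel
    rw [this]; abel
  · have key : Finset.univ.val.map (fun g => g + (π (g + -d) + -d)) =
        (Finset.univ.val.map fun g => g + -d).map (fun g => g + π g) := by
      rw [Multiset.map_map]
      congr 1
      funext g
      simp only [Function.comp_apply]
      abel
    simp only [Equiv.trans_apply, Equiv.coe_addRight]
    rw [key]
    congr 1
    have := Finset.map_univ_equiv (Equiv.addRight (-d) : G ≃ G)
    calc (Finset.univ.val.map fun g => g + -d)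
        = (Finset.univ.map (Equiv.addRight (-d)).toEmbedding).val := by
          simp [Finset.map]
      _ = Finset.univ.val := by rw [this]
end

section
/- Let G be a finite abelian group, written additively, of order n, and let M_G be the G×G matrix over the polynomial ring ℂ[x_g : g ∈ G] with (g,h) entry x_{g+h}. Let π₀ ∈ Perm(G) be the permutation g ↦ −g, with sign ε(π₀) ∈ {±1}. Then det(M_G) = ε(π₀) · ∏_{χ ∈ Ĝ} ( Σ_{g∈G} χ(g)·x_g ), where the product is over all n characters χ of G, i.e., all group homomorphisms χ : G → ℂˣ (values viewed in ℂ). In particular, det(M_G) is a product of n linear forms. -/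
open Finset MvPolynomial

section Aux

variable (G : Type*) [AddCommGroup G] [Fintype G] [DecidableEq G]

/-- The determinant of the "circulant" matrix `(g,h) ↦ X (h - g)` factors as the product of the
linear forms given by the characters. -/
theorem det_circulant_aux :
    Matrix.det (Matrix.of fun g h : G => (X (h - g) : MvPolynomial G ℂ)) =
      ∏ χ : AddChar G ℂ, ∑ g : G, C (χ g) * X g := by
  classical
  -- an equivalence between `G` and its character group
  obtain ⟨e⟩ : Nonempty (G ≃ AddChar G ℂ) :=
    ⟨(Fintype.equivOfCardEq (AddChar.card_eq).symm)⟩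
  -- the character matrix over ℂ
  set W : Matrix G G ℂ := Matrix.of fun g h : G => (e h) g with hW
  -- `W` is the change-of-basis matrix from the standard basis to the character basis
  have hWmat : W = (Pi.basisFun ℂ G).toMatrix ((AddChar.complexBasis G).reindex e.symm) := by
    ext g h
    simp [hW, Module.Basis.toMatrix_apply]
  have : Invertible W := hWmat ▸ Module.Basis.invertibleToMatrix _ _
  have hdetW : (W.det : ℂ) ≠ 0 := by
    intro h
    exact (Matrix.isUnit_iff_isUnit_det W).mp (isUnit_of_invertible W) |>.ne_zero h
  -- matrices over the polynomial ring
  set R := MvPolynomial G ℂ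
  set B : Matrix G G R := Matrix.of fun g h : G => (X (h - g) : R) with hB
  set Wc : Matrix G G R := W.map (C : ℂ →+* R) with hWc
  set D : Matrix G G R := Matrix.diagonal (fun h : G => ∑ g : G, C ((e h) g) * X g) with hD
  -- the key diagonalization identity
  have key : B * Wc = Wc * D := by
    ext g h
    rw [Matrix.mul_apply, Matrix.mul_apply]
    have : ∀ k : G, Wc g k * D k h = if k = h then Wc g k * (∑ m : G, C ((e h) m) * X m) else 0 := by
      intro k
      simp only [hD, Matrix.diagonal_apply]
      split_ifs with hkh
      · subst hkh; rfl
      · simp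
    rw [Finset.sum_congr rfl fun k _ => this k, Finset.sum_ite_eq' _ h, if_pos (mem_univ h)]
    -- LHS: reindex the sum over k by k = g + m
    have lhs : ∑ k : G, B g k * Wc k h = ∑ m : G, (X m : R) * C ((e h) (g + m)) := by
      refine (Fintype.sum_equiv (Equiv.addLeft g) _ _ fun m => ?_).symm
      simp [hB, hWc, Matrix.map_apply, hW, add_sub_cancel_left]
    rw [lhs]
    have rhs : ∀ m : G, (X m : R) * C ((e h) (g + m)) = C ((e h) g) * (C ((e h) m) * X m) := by
      intro m
      rw [AddChar.map_add_eq_mul, map_mul]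
      ring
    rw [Finset.sum_congr rfl fun m _ => rhs m, ← Finset.mul_sum]
    rfl
  -- take determinants and cancel `det Wc = C (det W)`
  have hdet : B.det * C W.det = C W.det * D.det := by
    have := congrArg Matrix.det key
    rwa [Matrix.det_mul, Matrix.det_mul, hWc, ← RingHom.mapMatrix_apply,
      ← RingHom.map_det] at this
  have hC : (C W.det : R) ≠ 0 := by
    simpa using hdetW
  have hBD : B.det = D.det := by
    rw [mul_comm] at hdet
    exact mul_left_cancel₀ hC hdet
  rw [hBD, hD, Matrix.det_diagonal]
  exact Fintype.prod_equiv e _ _ fun h => rfl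

end Aux

/-- For a finite abelian group `G` of order `n`, the determinant of the Cayley table
(the `G×G` matrix over `ℂ[x_g : g ∈ G]` with `(g,h)` entry `x_{g+h}`) factors as the sign
of the permutation `g ↦ −g` times the product, over all `n` characters `χ : G → ℂˣ`
(formalised as additive characters `AddChar G ℂ`), of the linear forms `Σ_g χ(g)·x_g`. -/
theorem det_cayley_table_eq_prod_linear_forms
    (G : Type*) [AddCommGroup G] [Fintype G] [DecidableEq G] :
    Matrix.det (Matrix.of fun g h : G => (X (g + h) : MvPolynomial G ℂ)) =
    ((Equiv.Perm.sign (Equiv.neg G) : ℤ) : MvPolynomial G ℂ) *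
      ∏ χ : AddChar G ℂ, ∑ g : G, C (χ g) * X g := by
  classical
  set A : Matrix G G (MvPolynomial G ℂ) := Matrix.of fun g h : G => (X (g + h)) with hA
  have hsub : A.submatrix (Equiv.neg G : Equiv.Perm G) id =
      Matrix.of fun g h : G => (X (h - g) : MvPolynomial G ℂ) := by
    ext g h
    simp [hA, sub_eq_neg_add]
  have h1 := Matrix.det_permute (Equiv.neg G : Equiv.Perm G) A
  rw [hsub, det_circulant_aux G] at h1
  have hs : ((Equiv.Perm.sign (Equiv.neg G) : ℤ) : MvPolynomial G ℂ) *
      ((Equiv.Perm.sign (Equiv.neg G) : ℤ) : MvPolynomial G ℂ) = 1 := by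
    rcases Int.units_eq_one_or (Equiv.Perm.sign (Equiv.neg G)) with h | h <;> simp [h]
  calc A.det = (((Equiv.Perm.sign (Equiv.neg G) : ℤ) : MvPolynomial G ℂ) *
        ((Equiv.Perm.sign (Equiv.neg G) : ℤ) : MvPolynomial G ℂ)) * A.det := by rw [hs, one_mul]
    _ = ((Equiv.Perm.sign (Equiv.neg G) : ℤ) : MvPolynomial G ℂ) *
        (((Equiv.Perm.sign (Equiv.neg G) : ℤ) : MvPolynomial G ℂ) * A.det) := by ring
    _ = _ := by rw [← h1]
end
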